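/- arXiv:2509.06702 — 2 statements merged into one kernel-verified Lean document; each statement's English description precedes it below -/
import Mathlib

section
/- Let f : ℝ^d × {1, …, T} → ℝ be bounded and L-Lipschitz in its first argument, uniformly in the time argument. For a Borel probability measure μ on ℝ^{dT} with finite second moment, define the optimal stopping value v(μ) = sup over stopping times τ (taking values in {1, …, T} and adapted to the coordinate filtration of the canonical process X under μ) of E_{X∼μ}[f(X_τ, τ)]. Then for all such μ, ν: |v(μ) − v(ν)| ≤ L · AW₂(μ, ν). -/
/-!
STATEMENT 6 (Lipschitz robustness of optimal stopping with respect to `AW₂`).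
Times are indexed by `Fin T` (0-based: index `t` corresponds to the paper's time `t+1`),
so the stopping time `τ` is adapted iff `{τ = t}` is measurable with respect to the
σ-algebra generated by the first `t+1` coordinates.
-/

open MeasureTheory ProbabilityTheory

/-- Path space: `d`-dimensional paths with `T` time steps. -/
abbrev PathSp (d T : ℕ) := Fin T → (Fin d → ℝ)

/-- A coupling of two measures. -/
def Coupling {α β : Type*} [MeasurableSpace α] [MeasurableSpace β]
    (π : Measure (α × β)) (μ : Measure α) (ν : Measure β) : Prop :=
  π.map Prod.fst = μ ∧ π.map Prod.snd = ν

/-- σ-algebra on a path space generated by the first `t` coordinates. -/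
def prefixSigma (E : Type*) [MeasurableSpace E] (T t : ℕ) :
    MeasurableSpace (Fin T → E) :=
  MeasurableSpace.comap (fun x (s : {s : Fin T // (s : ℕ) < t}) => x s) inferInstance

/-- Bicausality of a coupling, expressed through conditional expectations of bounded
measurable test functions. -/
def Bicausal {E : Type*} [MeasurableSpace E] {T : ℕ}
    (π : Measure ((Fin T → E) × (Fin T → E))) (μ ν : Measure (Fin T → E)) : Prop :=
  Coupling π μ ν ∧
  ∀ t : ℕ, 1 ≤ t → t ≤ T - 1 →
    (∀ f : (Fin T → E) → ℝ, Measurable f → (∃ C, ∀ x, |f x| ≤ C) →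
      π[fun p => f p.1 |
          ((prefixSigma E T t).comap Prod.fst) ⊔ ((prefixSigma E T t).comap Prod.snd)]
        =ᵐ[π] π[fun p => f p.1 | (prefixSigma E T t).comap Prod.fst]) ∧
    (∀ g : (Fin T → E) → ℝ, Measurable g → (∃ C, ∀ y, |g y| ≤ C) →
      π[fun p => g p.2 |
          ((prefixSigma E T t).comap Prod.fst) ⊔ ((prefixSigma E T t).comap Prod.snd)]
        =ᵐ[π] π[fun p => g p.2 | (prefixSigma E T t).comap Prod.snd])

/-- Squared adapted Wasserstein-2 distance. -/
noncomputable def AW2sq {d T : ℕ} (μ ν : Measure (PathSp d T)) : ℝ :=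
  sInf {r | ∃ π : Measure (PathSp d T × PathSp d T),
    Bicausal π μ ν ∧ r = ∫ p, ∑ t, ∑ i, (p.1 t i - p.2 t i) ^ 2 ∂π}

/-- Adapted Wasserstein-2 distance. -/
noncomputable def AW2 {d T : ℕ} (μ ν : Measure (PathSp d T)) : ℝ :=
  Real.sqrt (AW2sq μ ν)

/-- Finite second moment. -/
def FinSndMoment {d T : ℕ} (μ : Measure (PathSp d T)) : Prop :=
  Integrable (fun x => ∑ t, ∑ i, (x t i) ^ 2) μ

/-- A stopping time on path space: `{τ = t}` depends only on the first `t+1`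
coordinates (adapted to the coordinate filtration). -/
def IsStoppingTimePath {d T : ℕ} (τ : PathSp d T → Fin T) : Prop :=
  ∀ t : Fin T, MeasurableSet[prefixSigma (Fin d → ℝ) T ((t : ℕ) + 1)] {x | τ x = t}

/-- Optimal stopping value `v(μ) = sup_τ E_{X∼μ}[f(X_τ, τ)]`. -/
noncomputable def stopValue {d T : ℕ} (f : (Fin d → ℝ) → Fin T → ℝ)
    (μ : Measure (PathSp d T)) : ℝ :=
  sSup {r | ∃ τ : PathSp d T → Fin T, IsStoppingTimePath τ ∧
    r = ∫ x, f (x (τ x)) (τ x) ∂μ}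

section Prelim
open MeasureTheory Set

namespace OSR

variable {E : Type*} [MeasurableSpace E] {T : ℕ}

lemma measurable_res (T t : ℕ) :
    Measurable (fun (x : Fin T → E) (s : {s : Fin T // (s : ℕ) < t}) => x s) :=
  measurable_pi_lambda _ fun s => measurable_pi_apply _

lemma prefixSigma_le (t : ℕ) :
    prefixSigma E T t ≤ MeasurableSpace.pi :=
  (measurable_res T t).comap_le

lemma prefixSigma_mono {s t : ℕ} (hst : s ≤ t) :
    prefixSigma E T s ≤ prefixSigma E T t := by
  have hρ : Measurable (fun (g : {u : Fin T // (u : ℕ) < t} → E)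
      (u : {u : Fin T // (u : ℕ) < s}) => g ⟨u.1, lt_of_lt_of_le u.2 hst⟩) :=
    measurable_pi_lambda _ fun u => measurable_pi_apply _
  have : (fun (x : Fin T → E) (u : {u : Fin T // (u : ℕ) < s}) => x u)
      = (fun (g : {u : Fin T // (u : ℕ) < t} → E)
          (u : {u : Fin T // (u : ℕ) < s}) => g ⟨u.1, lt_of_lt_of_le u.2 hst⟩)
        ∘ (fun (x : Fin T → E) (u : {u : Fin T // (u : ℕ) < t}) => x u) := rfl
  rw [prefixSigma, this, ← MeasurableSpace.comap_comp]
  exact MeasurableSpace.comap_mono hρ.comap_le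

lemma measurable_eval_prefix {n : ℕ} (t : Fin T) (h : (t : ℕ) < n) :
    Measurable[prefixSigma E T n] (fun x : Fin T → E => x t) := by
  have h1 : Measurable[prefixSigma E T n]
      (fun (x : Fin T → E) (s : {s : Fin T // (s : ℕ) < n}) => x s) :=
    Measurable.of_comap_le le_rfl
  exact (measurable_pi_apply (⟨t, h⟩ : {s : Fin T // (s : ℕ) < n})).comp h1

end OSR
end Prelim
section CondexpHelpers
open MeasureTheory Set
namespace OSR

/-- Integrability of bounded measurable functions w.r.t. a finite measure. -/
lemma integrable_of_bounded {α : Type*} [MeasurableSpace α] {μ : Measure α}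
    [IsFiniteMeasure μ] {g : α → ℝ} {c : ℝ}
    (hg : AEStronglyMeasurable g μ) (hb : ∀ x, |g x| ≤ c) : Integrable g μ :=
  Integrable.mono' (integrable_const c) hg (Filter.Eventually.of_forall fun x => by
    simpa [Real.norm_eq_abs] using hb x)

/-- Conditional expectation commutes with pushforward. -/
lemma condexp_map {α β : Type*} {m : MeasurableSpace β}
    [mα : MeasurableSpace α] [mβ : MeasurableSpace β] (hm : m ≤ mβ)
    {φ : α → β} (hφ : Measurable φ) (μ : Measure α) [IsProbabilityMeasure μ]
    {g : β → ℝ} (hg : Integrable g (μ.map φ)) :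
    (fun a => ((μ.map φ)[g|m]) (φ a)) =ᵐ[μ] μ[(fun a => g (φ a)) | m.comap φ] := by
  haveI : IsProbabilityMeasure (μ.map φ) := Measure.isProbabilityMeasure_map hφ.aemeasurable
  have hφm : Measurable[mα, m] φ := fun s hs => hφ (hm _ hs)
  have hcm : m.comap φ ≤ mα := hφm.comap_le
  have hgφ : Integrable (fun a => g (φ a)) μ :=
    (integrable_map_measure hg.aestronglyMeasurable hφ.aemeasurable).mp hg
  have hint : Integrable (fun a => ((μ.map φ)[g|m]) (φ a)) μ :=
    (integrable_map_measure integrable_condExp.aestronglyMeasurable hφ.aemeasurable).mp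
      integrable_condExp
  refine ae_eq_condExp_of_forall_setIntegral_eq hcm hgφ
    (fun s _ _ => hint.integrableOn) (fun s hs _ => ?_) ?_
  · obtain ⟨A, hA, rfl⟩ := hs
    have hAb : MeasurableSet A := hm _ hA
    have e1 : ∫ a in φ ⁻¹' A, ((μ.map φ)[g|m]) (φ a) ∂μ
        = ∫ y in A, ((μ.map φ)[g|m]) y ∂(μ.map φ) :=
      (setIntegral_map hAb integrable_condExp.aestronglyMeasurable hφ.aemeasurable).symm
    have e2 : ∫ y in A, ((μ.map φ)[g|m]) y ∂(μ.map φ) = ∫ y in A, g y ∂(μ.map φ) :=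
      setIntegral_condExp hm hg hA
    have e3 : ∫ y in A, g y ∂(μ.map φ) = ∫ a in φ ⁻¹' A, g (φ a) ∂μ :=
      setIntegral_map hAb hg.aestronglyMeasurable hφ.aemeasurable
    exact e1.trans (e2.trans e3)
  · refine StronglyMeasurable.aestronglyMeasurable ?_
    exact (stronglyMeasurable_condExp (m := m)).comp_measurable
      (Measurable.of_comap_le le_rfl)

/-- A.e. bound for conditional expectation of a bounded function. -/
lemma condexp_abs_le {α : Type*} {m : MeasurableSpace α} [mα : MeasurableSpace α]
    (hm : m ≤ mα) (μ : Measure α) [IsProbabilityMeasure μ] {g : α → ℝ} {c : ℝ}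
    (hgi : Integrable g μ) (hb : ∀ x, |g x| ≤ c) :
    ∀ᵐ x ∂μ, |(μ[g|m]) x| ≤ c := by
  have h1 : μ[g|m] ≤ᵐ[μ] μ[(fun _ => c)|m] :=
    condExp_mono hgi (integrable_const c)
      (Filter.Eventually.of_forall fun x => (abs_le.mp (hb x)).2)
  have h2 : μ[(fun _ => -c)|m] ≤ᵐ[μ] μ[g|m] :=
    condExp_mono (integrable_const (-c)) hgi
      (Filter.Eventually.of_forall fun x => (abs_le.mp (hb x)).1)
  have hc : μ[(fun _ => c)|m] = fun _ => c := condExp_const (μ := μ) hm c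
  have hc' : μ[(fun _ => -c)|m] = fun _ => -c := condExp_const (μ := μ) hm (-c)
  filter_upwards [h1, h2] with x hx1 hx2
  rw [hc] at hx1; rw [hc'] at hx2
  exact abs_le.mpr ⟨hx2, hx1⟩

/-- Truncation of a real number into `[-c, c]`. -/
def trunc (c r : ℝ) : ℝ := max (-c) (min c r)

lemma trunc_eq {c r : ℝ} (h : |r| ≤ c) : trunc c r = r := by
  rcases abs_le.mp h with ⟨h1, h2⟩
  simp [trunc, min_eq_right h2, max_eq_right h1]

lemma abs_trunc_le {c : ℝ} (hc : 0 ≤ c) (r : ℝ) : |trunc c r| ≤ c := by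
  rw [abs_le]
  refine ⟨le_max_left _ _, max_le (by linarith) (min_le_left _ _)⟩

lemma measurable_trunc_comp {α : Type*} {m : MeasurableSpace α} {c : ℝ} {g : α → ℝ}
    (hg : Measurable[m] g) : Measurable[m] (fun x => trunc c (g x)) :=
  (measurable_const.max (measurable_const.min hg))

end OSR
end CondexpHelpers
section ProdBicausal
open MeasureTheory Set MeasurableSpace
namespace OSR

lemma setIntegral_prod_fst' {β : Type*} [MeasurableSpace β] (μ ν : Measure β)
    [SFinite μ] [SFinite ν] (G : β → ℝ) (A B : Set β) :
    ∫ p in A ×ˢ B, G p.1 ∂(μ.prod ν) = (∫ x in A, G x ∂μ) * (ν B).toReal := by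
  have h := setIntegral_prod_mul (μ := μ) (ν := ν) G (fun _ => (1 : ℝ)) A B
  simpa [Measure.real] using h

lemma setIntegral_prod_snd' {β : Type*} [MeasurableSpace β] (μ ν : Measure β)
    [SFinite μ] [SFinite ν] (G : β → ℝ) (A B : Set β) :
    ∫ p in A ×ˢ B, G p.2 ∂(μ.prod ν) = (μ A).toReal * ∫ y in B, G y ∂ν := by
  have h := setIntegral_prod_mul (μ := μ) (ν := ν) (fun _ => (1 : ℝ)) G A B
  simpa [Measure.real] using h

/-- Agreement of set integrals on the sup σ-algebra from agreement on rectangles. -/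
lemma setIntegral_eq_on_sup {β : Type*} {m : MeasurableSpace β} [mβ : MeasurableSpace β]
    (hm : m ≤ mβ) (μ ν : Measure β) [IsProbabilityMeasure μ] [IsProbabilityMeasure ν]
    {h₁ h₂ : β × β → ℝ} (int₁ : Integrable h₁ (μ.prod ν)) (int₂ : Integrable h₂ (μ.prod ν))
    (hbasic : ∀ A B : Set β, MeasurableSet[m] A → MeasurableSet[m] B →
      ∫ p in A ×ˢ B, h₁ p ∂(μ.prod ν) = ∫ p in A ×ˢ B, h₂ p ∂(μ.prod ν)) :
    ∀ s : Set (β × β), MeasurableSet[m.comap Prod.fst ⊔ m.comap Prod.snd] s →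
      ∫ p in s, h₁ p ∂(μ.prod ν) = ∫ p in s, h₂ p ∂(μ.prod ν) := by
  have hsup : (m.comap Prod.fst ⊔ m.comap Prod.snd : MeasurableSpace (β × β))
      ≤ (inferInstance : MeasurableSpace (β × β)) :=
    sup_le ((MeasurableSpace.comap_mono hm).trans measurable_fst.comap_le)
      ((MeasurableSpace.comap_mono hm).trans measurable_snd.comap_le)
  have h_eq : (m.comap Prod.fst ⊔ m.comap Prod.snd : MeasurableSpace (β × β))
      = generateFrom (image2 (· ×ˢ ·) {s : Set β | MeasurableSet[m] s}
          {t : Set β | MeasurableSet[m] t}) := (@generateFrom_prod β β m m).symm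
  have htotal : ∫ p, h₁ p ∂(μ.prod ν) = ∫ p, h₂ p ∂(μ.prod ν) := by
    have h := hbasic univ univ MeasurableSet.univ MeasurableSet.univ
    simpa [Set.univ_prod_univ] using h
  intro s hs
  refine MeasurableSpace.induction_on_inter (m := m.comap Prod.fst ⊔ m.comap Prod.snd)
    (C := fun s _ => ∫ p in s, h₁ p ∂(μ.prod ν) = ∫ p in s, h₂ p ∂(μ.prod ν))
    h_eq (@isPiSystem_prod β β m m)
    (by simp) ?_ ?_ ?_ s hs
  · rintro t ⟨A, hA, B, hB, rfl⟩
    exact hbasic A B hA hB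
  · intro t htm hC
    have htb : MeasurableSet t := hsup _ htm
    have e1 := integral_add_compl htb int₁
    have e2 := integral_add_compl htb int₂
    linarith
  · intro g hdisj hmeas hC
    rw [integral_iUnion (fun i => hsup _ (hmeas i)) hdisj int₁.integrableOn,
      integral_iUnion (fun i => hsup _ (hmeas i)) hdisj int₂.integrableOn]
    exact tsum_congr hC

/-- Under a product measure, conditioning a function of the first coordinate on the
joint σ-algebra is the same as conditioning on the first-coordinate σ-algebra. -/
lemma prod_condexp_fst {β : Type*} {m : MeasurableSpace β} [mβ : MeasurableSpace β]
    (hm : m ≤ mβ) (μ ν : Measure β) [IsProbabilityMeasure μ] [IsProbabilityMeasure ν]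
    {F : β → ℝ} (hFm : Measurable F) {c : ℝ} (hFb : ∀ x, |F x| ≤ c) :
    (μ.prod ν)[(fun p => F p.1) | m.comap Prod.fst ⊔ m.comap Prod.snd]
      =ᵐ[μ.prod ν] (μ.prod ν)[(fun p => F p.1) | m.comap Prod.fst] := by
  set π := μ.prod ν with hπ
  have hsup : (m.comap Prod.fst ⊔ m.comap Prod.snd : MeasurableSpace (β × β))
      ≤ (inferInstance : MeasurableSpace (β × β)) :=
    sup_le ((MeasurableSpace.comap_mono hm).trans measurable_fst.comap_le)
      ((MeasurableSpace.comap_mono hm).trans measurable_snd.comap_le)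
  have hFμ : Integrable F μ := integrable_of_bounded hFm.aestronglyMeasurable hFb
  have hmapfst : π.map Prod.fst = μ := by
    simp [hπ, Measure.map_fst_prod, measure_univ]
  have hgmap : Integrable F (π.map Prod.fst) := by rwa [hmapfst]
  -- the candidate
  set h : β × β → ℝ := fun p => (μ[F|m]) p.1 with hh
  have claim1 : h =ᵐ[π] π[(fun p => F p.1) | m.comap Prod.fst] := by
    have := condexp_map hm measurable_fst π hgmap
    rwa [hmapfst] at this
  have hcondm : StronglyMeasurable[m] (μ[F|m]) := stronglyMeasurable_condExp
  have hcondint : Integrable (μ[F|m]) μ := integrable_condExp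
  have hhint : Integrable h π := by
    have : Integrable (μ[F|m]) (π.map Prod.fst) := by rwa [hmapfst]
    exact (integrable_map_measure
      ((hcondm.mono hm).aestronglyMeasurable) measurable_fst.aemeasurable).mp this
  have hFfst : Integrable (fun p : β × β => F p.1) π :=
    integrable_of_bounded (hFm.comp measurable_fst).aestronglyMeasurable
      (fun p => hFb p.1)
  have claim2 : h =ᵐ[π] π[(fun p => F p.1) | m.comap Prod.fst ⊔ m.comap Prod.snd] := by
    refine ae_eq_condExp_of_forall_setIntegral_eq hsup hFfst
      (fun s _ _ => hhint.integrableOn) (fun s hs _ => ?_) ?_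
    · refine setIntegral_eq_on_sup hm μ ν hhint hFfst (fun A B hA hB => ?_) s hs
      rw [setIntegral_prod_fst' μ ν (μ[F|m]) A B, setIntegral_prod_fst' μ ν F A B,
        setIntegral_condExp hm hFμ hA]
    · refine StronglyMeasurable.aestronglyMeasurable ?_
      have h1 : StronglyMeasurable[m.comap Prod.fst] h :=
        hcondm.comp_measurable (Measurable.of_comap_le le_rfl)
      exact h1.mono le_sup_left
  exact claim2.symm.trans claim1

/-- Symmetric version for the second coordinate. -/
lemma prod_condexp_snd {β : Type*} {m : MeasurableSpace β} [mβ : MeasurableSpace β]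
    (hm : m ≤ mβ) (μ ν : Measure β) [IsProbabilityMeasure μ] [IsProbabilityMeasure ν]
    {F : β → ℝ} (hFm : Measurable F) {c : ℝ} (hFb : ∀ x, |F x| ≤ c) :
    (μ.prod ν)[(fun p => F p.2) | m.comap Prod.fst ⊔ m.comap Prod.snd]
      =ᵐ[μ.prod ν] (μ.prod ν)[(fun p => F p.2) | m.comap Prod.snd] := by
  set π := μ.prod ν with hπ
  have hsup : (m.comap Prod.fst ⊔ m.comap Prod.snd : MeasurableSpace (β × β))
      ≤ (inferInstance : MeasurableSpace (β × β)) :=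
    sup_le ((MeasurableSpace.comap_mono hm).trans measurable_fst.comap_le)
      ((MeasurableSpace.comap_mono hm).trans measurable_snd.comap_le)
  have hFν : Integrable F ν := integrable_of_bounded hFm.aestronglyMeasurable hFb
  have hmapsnd : π.map Prod.snd = ν := by
    simp [hπ, Measure.map_snd_prod, measure_univ]
  have hgmap : Integrable F (π.map Prod.snd) := by rwa [hmapsnd]
  set h : β × β → ℝ := fun p => (ν[F|m]) p.2 with hh
  have claim1 : h =ᵐ[π] π[(fun p => F p.2) | m.comap Prod.snd] := by
    have := condexp_map hm measurable_snd π hgmap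
    rwa [hmapsnd] at this
  have hcondm : StronglyMeasurable[m] (ν[F|m]) := stronglyMeasurable_condExp
  have hhint : Integrable h π := by
    have : Integrable (ν[F|m]) (π.map Prod.snd) := by
      rw [hmapsnd]; exact integrable_condExp
    exact (integrable_map_measure
      ((hcondm.mono hm).aestronglyMeasurable) measurable_snd.aemeasurable).mp this
  have hFsnd : Integrable (fun p : β × β => F p.2) π :=
    integrable_of_bounded (hFm.comp measurable_snd).aestronglyMeasurable
      (fun p => hFb p.2)
  have claim2 : h =ᵐ[π] π[(fun p => F p.2) | m.comap Prod.fst ⊔ m.comap Prod.snd] := by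
    refine ae_eq_condExp_of_forall_setIntegral_eq hsup hFsnd
      (fun s _ _ => hhint.integrableOn) (fun s hs _ => ?_) ?_
    · refine setIntegral_eq_on_sup hm μ ν hhint hFsnd (fun A B hA hB => ?_) s hs
      rw [setIntegral_prod_snd' μ ν (ν[F|m]) A B, setIntegral_prod_snd' μ ν F A B,
        setIntegral_condExp hm hFν hB]
    · refine StronglyMeasurable.aestronglyMeasurable ?_
      have h1 : StronglyMeasurable[m.comap Prod.snd] h :=
        hcondm.comp_measurable (Measurable.of_comap_le le_rfl)
      exact h1.mono le_sup_right
  exact claim2.symm.trans claim1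

/-- The product coupling is bicausal. -/
lemma bicausal_prod {E : Type*} [MeasurableSpace E] {T : ℕ}
    (μ ν : Measure (Fin T → E)) [IsProbabilityMeasure μ] [IsProbabilityMeasure ν] :
    Bicausal (μ.prod ν) μ ν := by
  refine ⟨⟨?_, ?_⟩, ?_⟩
  · simp [Measure.map_fst_prod, measure_univ]
  · simp [Measure.map_snd_prod, measure_univ]
  · intro t _ _
    constructor
    · rintro F hF ⟨c, hc⟩
      exact prod_condexp_fst (prefixSigma_le t) μ ν hF hc
    · rintro F hF ⟨c, hc⟩
      exact prod_condexp_snd (prefixSigma_le t) μ ν hF hc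

end OSR
end ProdBicausal
section Snell
open MeasureTheory Set
namespace OSR

variable {d T : ℕ}

/-- Snell envelope, indexed by number of steps `k` before the final time:
`snell f C ν k` is the value function at time `T - 1 - k`. -/
noncomputable def snell (f : (Fin d → ℝ) → Fin T → ℝ) (C : ℝ)
    (ν : Measure (PathSp d T)) : ℕ → PathSp d T → ℝ
  | 0 => fun y =>
      if h : 0 < T then f (y ⟨T - 1, by omega⟩) ⟨T - 1, by omega⟩ else 0
  | (k + 1) => fun y =>
      if h : k + 1 < T then
        max (f (y ⟨T - 1 - (k + 1), by omega⟩) ⟨T - 1 - (k + 1), by omega⟩)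
          (trunc C ((ν[snell f C ν k | prefixSigma (Fin d → ℝ) T (T - 1 - k)]) y))
      else 0

variable {f : (Fin d → ℝ) → Fin T → ℝ} {C : ℝ} {ν : Measure (PathSp d T)}

lemma snell_abs_le (hC : 0 ≤ C) (hbdd : ∀ u t, |f u t| ≤ C) :
    ∀ k y, |snell f C ν k y| ≤ C := by
  intro k
  induction k with
  | zero =>
    intro y
    by_cases h : 0 < T
    · simpa [snell, h] using hbdd _ _
    · simp [snell, h, hC]
  | succ k ih =>
    intro y
    by_cases h : k + 1 < T
    · simp only [snell, dif_pos h]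
      rw [abs_le]
      constructor
      · exact le_max_of_le_left (abs_le.mp (hbdd _ _)).1
      · exact max_le (abs_le.mp (hbdd _ _)).2 (abs_le.mp (abs_trunc_le hC _)).2
    · simp [snell, dif_neg h, hC]

lemma snell_stronglyMeasurable (hfc : ∀ t : Fin T, Continuous (fun u => f u t)) :
    ∀ k, StronglyMeasurable[prefixSigma (Fin d → ℝ) T (T - k)] (snell f C ν k) := by
  intro k
  induction k with
  | zero =>
    by_cases h : 0 < T
    · have : snell f C ν 0 = fun y : PathSp d T =>
        f (y ⟨T - 1, by omega⟩) ⟨T - 1, by omega⟩ := by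
        funext y; simp [snell, dif_pos h]
      rw [this]
      exact (((hfc _).measurable.comp
        (measurable_eval_prefix _ (by omega : T - 1 < T - 0))).stronglyMeasurable)
    · have : snell f C ν 0 = fun _ : PathSp d T => (0 : ℝ) := by
        funext y; simp [snell, dif_neg h]
      rw [this]; exact stronglyMeasurable_const
  | succ k ih =>
    by_cases h : k + 1 < T
    · have heq : snell f C ν (k + 1) = fun y : PathSp d T =>
        max (f (y ⟨T - 1 - (k + 1), by omega⟩) ⟨T - 1 - (k + 1), by omega⟩)
          (trunc C ((ν[snell f C ν k | prefixSigma (Fin d → ℝ) T (T - 1 - k)]) y)) := by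
        funext y; simp [snell, dif_pos h]
      rw [heq]
      have h1 : Measurable[prefixSigma (Fin d → ℝ) T (T - (k + 1))]
          (fun y : PathSp d T => f (y ⟨T - 1 - (k + 1), by omega⟩) ⟨T - 1 - (k + 1), by omega⟩) :=
        (hfc _).measurable.comp (measurable_eval_prefix ⟨T - 1 - (k + 1), by omega⟩
          (by show T - 1 - (k + 1) < T - (k + 1); omega))
      have h2 : StronglyMeasurable[prefixSigma (Fin d → ℝ) T (T - 1 - k)]
          (ν[snell f C ν k | prefixSigma (Fin d → ℝ) T (T - 1 - k)]) :=
        stronglyMeasurable_condExp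
      have h2' : Measurable[prefixSigma (Fin d → ℝ) T (T - (k + 1))]
          (fun y => trunc C ((ν[snell f C ν k | prefixSigma (Fin d → ℝ) T (T - 1 - k)]) y)) := by
        have : T - 1 - k = T - (k + 1) := by omega
        rw [← this]
        exact measurable_trunc_comp h2.measurable
      exact (h1.max h2').stronglyMeasurable
    · have : snell f C ν (k + 1) = fun _ : PathSp d T => (0 : ℝ) := by
        funext y; simp [snell, dif_neg h]
      rw [this]; exact stronglyMeasurable_const

lemma snell_measurable (hfc : ∀ t : Fin T, Continuous (fun u => f u t)) (k : ℕ) :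
    Measurable (snell f C ν k) :=
  ((snell_stronglyMeasurable hfc k).mono (prefixSigma_le _)).measurable

end OSR
end Snell
section Tstar
open MeasureTheory Set
namespace OSR

variable {d T : ℕ} {f : (Fin d → ℝ) → Fin T → ℝ} {C : ℝ} {ν : Measure (PathSp d T)}

/-- Snell envelope indexed by time. -/
noncomputable def Vt (f : (Fin d → ℝ) → Fin T → ℝ) (C : ℝ) (ν : Measure (PathSp d T))
    (t : Fin T) : PathSp d T → ℝ :=
  snell f C ν (T - 1 - (t : ℕ))

lemma Vt_last (hT : 0 < T) :
    Vt f C ν ⟨T - 1, by omega⟩ = fun y => f (y ⟨T - 1, by omega⟩) ⟨T - 1, by omega⟩ := by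
  unfold Vt
  have h0 : T - 1 - (T - 1) = 0 := by omega
  rw [show ((⟨T - 1, by omega⟩ : Fin T) : ℕ) = T - 1 from rfl, h0]
  funext y
  simp [snell, dif_pos hT]

lemma Vt_rec (t : Fin T) (h : (t : ℕ) + 1 < T) :
    Vt f C ν t = fun y =>
      max (f (y t) t)
        (trunc C ((ν[Vt f C ν ⟨(t : ℕ) + 1, h⟩ |
          prefixSigma (Fin d → ℝ) T ((t : ℕ) + 1)]) y)) := by
  unfold Vt
  have hk : T - 1 - (t : ℕ) = (T - 1 - ((t : ℕ) + 1)) + 1 := by omega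
  rw [hk]
  set k := T - 1 - ((t : ℕ) + 1) with hkdef
  have hklt : k + 1 < T := by omega
  have hidx : (⟨T - 1 - (k + 1), by omega⟩ : Fin T) = t := by
    apply Fin.ext; show T - 1 - (k + 1) = (t : ℕ); omega
  have hlvl : T - 1 - k = (t : ℕ) + 1 := by omega
  have hcoe : T - 1 - (((⟨(t : ℕ) + 1, h⟩ : Fin T)) : ℕ) = k := by
    show T - 1 - ((t : ℕ) + 1) = k; rw [hkdef]
  funext y
  show (if _ : k + 1 < T then _ else _) = _
  rw [dif_pos hklt]
  rw [hidx, hlvl]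

lemma Vt_stronglyMeasurable (hfc : ∀ t : Fin T, Continuous (fun u => f u t)) (t : Fin T) :
    StronglyMeasurable[prefixSigma (Fin d → ℝ) T ((t : ℕ) + 1)] (Vt f C ν t) := by
  have h := snell_stronglyMeasurable (ν := ν) (C := C) hfc (T - 1 - (t : ℕ))
  have : T - (T - 1 - (t : ℕ)) = (t : ℕ) + 1 := by omega
  rw [this] at h
  exact h

lemma Vt_measurable (hfc : ∀ t : Fin T, Continuous (fun u => f u t)) (t : Fin T) :
    Measurable (Vt f C ν t) :=
  ((Vt_stronglyMeasurable hfc t).mono (prefixSigma_le _)).measurable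

lemma Vt_abs_le (hC : 0 ≤ C) (hbdd : ∀ u t, |f u t| ≤ C) (t : Fin T) (y : PathSp d T) :
    |Vt f C ν t y| ≤ C := snell_abs_le hC hbdd _ y

lemma f_le_Vt (t : Fin T) (y : PathSp d T) : f (y t) t ≤ Vt f C ν t y := by
  by_cases h : (t : ℕ) + 1 < T
  · rw [Vt_rec t h]; exact le_max_left _ _
  · have ht : t = ⟨T - 1, by omega⟩ := by apply Fin.ext; show (t : ℕ) = T - 1; omega
    have hT : 0 < T := by omega
    rw [ht, Vt_last hT]

open Classical in
/-- The optimal stopping time: the first time the payoff touches the Snell envelope. -/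
noncomputable def tstar (f : (Fin d → ℝ) → Fin T → ℝ) (C : ℝ) (ν : Measure (PathSp d T))
    (hT : 0 < T) (y : PathSp d T) : Fin T :=
  Finset.min' (Finset.univ.filter (fun t : Fin T => f (y t) t = Vt f C ν t y))
    ⟨⟨T - 1, by omega⟩, by
      simp only [Finset.mem_filter, Finset.mem_univ, true_and]
      rw [Vt_last hT]⟩

lemma tstar_spec (hT : 0 < T) (y : PathSp d T) :
    f (y (tstar f C ν hT y)) (tstar f C ν hT y) = Vt f C ν (tstar f C ν hT y) y := by
  classical
  have hne : (Finset.univ.filter (fun t : Fin T => f (y t) t = Vt f C ν t y)).Nonempty :=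
    ⟨⟨T - 1, by omega⟩, by
      simp only [Finset.mem_filter, Finset.mem_univ, true_and]
      rw [Vt_last hT]⟩
  have h := Finset.min'_mem _ hne
  exact (Finset.mem_filter.mp h).2

lemma tstar_min (hT : 0 < T) (y : PathSp d T) {s : Fin T} (hs : s < tstar f C ν hT y) :
    f (y s) s ≠ Vt f C ν s y := by
  classical
  intro heq
  have hmem : s ∈ Finset.univ.filter (fun t : Fin T => f (y t) t = Vt f C ν t y) := by
    simp [Finset.mem_filter, heq]
  exact absurd (Finset.min'_le _ _ hmem) (not_le.mpr hs)

lemma tstar_eq_iff (hT : 0 < T) (y : PathSp d T) (t : Fin T) :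
    tstar f C ν hT y = t ↔
      (f (y t) t = Vt f C ν t y ∧ ∀ s : Fin T, s < t → f (y s) s ≠ Vt f C ν s y) := by
  classical
  constructor
  · rintro rfl
    exact ⟨tstar_spec hT y, fun s hs => tstar_min hT y hs⟩
  · rintro ⟨ht, hmin⟩
    have hmem : t ∈ Finset.univ.filter (fun u : Fin T => f (y u) u = Vt f C ν u y) := by
      simp [Finset.mem_filter, ht]
    have h1 : tstar f C ν hT y ≤ t := Finset.min'_le _ _ hmem
    rcases lt_or_eq_of_le h1 with h2 | h2
    · exact absurd (tstar_spec hT y) (hmin _ h2)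
    · exact h2

lemma isStoppingTime_tstar (hfc : ∀ t : Fin T, Continuous (fun u => f u t)) (hT : 0 < T) :
    IsStoppingTimePath (tstar f C ν hT) := by
  intro t
  have hset : {y : PathSp d T | tstar f C ν hT y = t}
      = {y | f (y t) t = Vt f C ν t y} ∩
        ⋂ (s : Fin T) (_ : s < t), {y | f (y s) s = Vt f C ν s y}ᶜ := by
    ext y
    simp only [Set.mem_setOf_eq, Set.mem_inter_iff, Set.mem_iInter, Set.mem_compl_iff,
      tstar_eq_iff hT y t]
  rw [hset]
  have hmeas : ∀ s : Fin T, (s : ℕ) < (t : ℕ) + 1 →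
      MeasurableSet[prefixSigma (Fin d → ℝ) T ((t : ℕ) + 1)]
        {y : PathSp d T | f (y s) s = Vt f C ν s y} := by
    intro s hs
    have h1 : Measurable[prefixSigma (Fin d → ℝ) T ((t : ℕ) + 1)]
        (fun y : PathSp d T => f (y s) s) :=
      (hfc s).measurable.comp (measurable_eval_prefix s hs)
    have h2 : Measurable[prefixSigma (Fin d → ℝ) T ((t : ℕ) + 1)] (Vt f C ν s) :=
      ((Vt_stronglyMeasurable hfc s).mono (prefixSigma_mono (by omega))).measurable
    exact measurableSet_eq_fun h1 h2
  refine MeasurableSet.inter (hmeas t (by omega)) ?_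
  refine MeasurableSet.iInter fun s => ?_
  refine MeasurableSet.iInter fun hs => ?_
  exact (hmeas s (by omega : (s : ℕ) < (t : ℕ) + 1)).compl

/-- The sublevel sets of a stopping time are measurable for the corresponding prefix
σ-algebras. -/
lemma stoppingTime_le_measurable {τ : PathSp d T → Fin T} (hτ : IsStoppingTimePath τ)
    (n : ℕ) :
    MeasurableSet[prefixSigma (Fin d → ℝ) T n] {y : PathSp d T | ((τ y : ℕ) < n)} := by
  have : {y : PathSp d T | ((τ y : ℕ) < n)} = ⋃ (s : Fin T) (_ : (s : ℕ) < n), {y | τ y = s} := by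
    ext y
    simp only [Set.mem_setOf_eq, Set.mem_iUnion]
    constructor
    · intro h; exact ⟨τ y, h, rfl⟩
    · rintro ⟨s, hs, rfl⟩; exact hs
  rw [this]
  refine MeasurableSet.iUnion fun s => MeasurableSet.iUnion fun hs => ?_
  exact prefixSigma_mono (by omega : (s : ℕ) + 1 ≤ n) _ (hτ s)

lemma stoppingTime_ge_measurable {τ : PathSp d T → Fin T} (hτ : IsStoppingTimePath τ)
    (n : ℕ) :
    MeasurableSet[prefixSigma (Fin d → ℝ) T n] {y : PathSp d T | n ≤ (τ y : ℕ)} := by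
  have : {y : PathSp d T | n ≤ (τ y : ℕ)} = {y : PathSp d T | ((τ y : ℕ) < n)}ᶜ := by
    ext y; simp [not_lt]
  rw [this]
  exact (stoppingTime_le_measurable hτ n).compl

end OSR
end Tstar
section NuSide
open MeasureTheory Set
namespace OSR

variable {d T : ℕ} {f : (Fin d → ℝ) → Fin T → ℝ} {C : ℝ} {ν : Measure (PathSp d T)}

lemma stopPay_eq_sum (τ : PathSp d T → Fin T) (y : PathSp d T) :
    f (y (τ y)) (τ y)
      = ∑ t : Fin T, Set.indicator {y | τ y = t} (fun y => f (y t) t) y := by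
  rw [Finset.sum_eq_single (τ y)]
  · simp [Set.indicator_of_mem, Set.mem_setOf_eq]
  · intro t _ ht
    exact Set.indicator_of_notMem (by simpa [Set.mem_setOf_eq] using (Ne.symm ht)) _
  · simp

lemma stopPay_measurable (hfc : ∀ t : Fin T, Continuous (fun u => f u t))
    {τ : PathSp d T → Fin T} (hτ : IsStoppingTimePath τ) :
    Measurable (fun y => f (y (τ y)) (τ y)) := by
  have : (fun y : PathSp d T => f (y (τ y)) (τ y))
      = fun y => ∑ t : Fin T, Set.indicator {y | τ y = t} (fun y => f (y t) t) y := by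
    funext y; exact stopPay_eq_sum τ y
  rw [this]
  refine Finset.measurable_sum _ fun t _ => ?_
  refine Measurable.indicator ?_ (prefixSigma_le _ _ (hτ t))
  exact (hfc t).measurable.comp (measurable_pi_apply t)

/-- The ν-side backward induction: the Snell envelope value is attained (from below)
by the stopping time `tstar`. -/
lemma snell_setIntegral_le (hC : 0 ≤ C) (hbdd : ∀ u t, |f u t| ≤ C)
    (hfc : ∀ t : Fin T, Continuous (fun u => f u t)) (hT : 0 < T)
    [IsProbabilityMeasure ν] :
    ∀ k, k < T →
      ∫ y in {y | T - 1 - k ≤ ((tstar f C ν hT y : Fin T) : ℕ)}, snell f C ν k y ∂ν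
        ≤ ∫ y in {y | T - 1 - k ≤ ((tstar f C ν hT y : Fin T) : ℕ)},
            f (y (tstar f C ν hT y)) (tstar f C ν hT y) ∂ν := by
  have hstop : IsStoppingTimePath (tstar f C ν hT) := isStoppingTime_tstar hfc hT
  have hpayint : Integrable (fun y => f (y (tstar f C ν hT y)) (tstar f C ν hT y)) ν :=
    integrable_of_bounded (stopPay_measurable hfc hstop).aestronglyMeasurable
      (fun y => hbdd _ _)
  have hsnellint : ∀ j, Integrable (snell f C ν j) ν := fun j =>
    integrable_of_bounded (snell_measurable hfc j).aestronglyMeasurable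
      (snell_abs_le hC hbdd j)
  intro k
  induction k with
  | zero =>
    intro _
    have hAm : MeasurableSet {y : PathSp d T | T - 1 - 0 ≤ ((tstar f C ν hT y : Fin T) : ℕ)} :=
      prefixSigma_le _ _ (stoppingTime_ge_measurable hstop (T - 1 - 0))
    refine le_of_eq (setIntegral_congr_fun hAm fun y hy => ?_)
    have hy' : tstar f C ν hT y = ⟨T - 1, by omega⟩ := by
      apply Fin.ext
      have h2 : ((tstar f C ν hT y : Fin T) : ℕ) < T := (tstar f C ν hT y).2
      have h1 : T - 1 - 0 ≤ ((tstar f C ν hT y : Fin T) : ℕ) := hy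
      show ((tstar f C ν hT y : Fin T) : ℕ) = T - 1
      omega
    have hspec := tstar_spec (f := f) (C := C) (ν := ν) hT y
    have hVt : Vt f C ν (tstar f C ν hT y) y = snell f C ν 0 y := by
      rw [hy']
      have h0 : T - 1 - ((⟨T - 1, by omega⟩ : Fin T) : ℕ) = 0 := by
        show T - 1 - (T - 1) = 0; omega
      show snell f C ν (T - 1 - ((⟨T - 1, by omega⟩ : Fin T) : ℕ)) y = snell f C ν 0 y
      rw [h0]
    rw [hspec, hVt]
  | succ k ih =>
    intro hk1
    have hkT : k < T := by omega
    set tF : Fin T := ⟨T - 1 - (k + 1), by omega⟩ with htF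
    set A1 : Set (PathSp d T) := {y | tstar f C ν hT y = tF} with hA1def
    set A2 : Set (PathSp d T) := {y | T - 1 - k ≤ ((tstar f C ν hT y : Fin T) : ℕ)} with hA2def
    have hsplit : {y : PathSp d T | T - 1 - (k + 1) ≤ ((tstar f C ν hT y : Fin T) : ℕ)}
        = A1 ∪ A2 := by
      ext y
      have hval : (tstar f C ν hT y = tF) ↔
          ((tstar f C ν hT y : Fin T) : ℕ) = T - 1 - (k + 1) := by
        rw [Fin.ext_iff]
      simp only [Set.mem_setOf_eq, Set.mem_union, hA1def, hA2def, hval]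
      omega
    have hA1m : MeasurableSet A1 := prefixSigma_le _ _ (hstop tF)
    have hA2m : MeasurableSet A2 :=
      prefixSigma_le _ _ (stoppingTime_ge_measurable hstop (T - 1 - k))
    have hdisj : Disjoint A1 A2 := by
      rw [Set.disjoint_left]
      intro y hy1 hy2
      rw [hA1def, Set.mem_setOf_eq] at hy1
      rw [hA2def, Set.mem_setOf_eq] at hy2
      have : ((tstar f C ν hT y : Fin T) : ℕ) = T - 1 - (k + 1) := by rw [hy1]
      omega
    rw [hsplit]
    rw [setIntegral_union hdisj hA2m (hsnellint (k+1)).integrableOn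
      (hsnellint (k+1)).integrableOn,
      setIntegral_union hdisj hA2m hpayint.integrableOn hpayint.integrableOn]
    have htF1 : ((tF : Fin T) : ℕ) + 1 < T := by show T - 1 - (k+1) + 1 < T; omega
    have hVtF : Vt f C ν tF = snell f C ν (k + 1) := by
      have h1 : T - 1 - ((tF : Fin T) : ℕ) = k + 1 := by
        show T - 1 - (T - 1 - (k + 1)) = k + 1; omega
      unfold Vt; rw [h1]
    have hVtF' : Vt f C ν ⟨(tF : ℕ) + 1, htF1⟩ = snell f C ν k := by
      have h1 : T - 1 - (((⟨(tF : ℕ) + 1, htF1⟩ : Fin T)) : ℕ) = k := by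
        show T - 1 - (T - 1 - (k + 1) + 1) = k; omega
      unfold Vt; rw [h1]
    have hVtrec := Vt_rec (f := f) (C := C) (ν := ν) tF htF1
    rw [hVtF, hVtF'] at hVtrec
    have hlvl : ((tF : Fin T) : ℕ) + 1 = T - 1 - k := by
      show T - 1 - (k+1) + 1 = T - 1 - k; omega
    -- On A1 the Snell value equals the payoff
    have hA1eq : ∫ y in A1, snell f C ν (k + 1) y ∂ν
        = ∫ y in A1, f (y (tstar f C ν hT y)) (tstar f C ν hT y) ∂ν := by
      refine setIntegral_congr_fun hA1m fun y hy => ?_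
      rw [hA1def, Set.mem_setOf_eq] at hy
      have hspec := tstar_spec (f := f) (C := C) (ν := ν) hT y
      rw [hy] at hspec ⊢
      rw [hspec, hVtF]
    -- On A2 the Snell value is the (truncated) conditional expectation
    have hcondint : Integrable (snell f C ν k) ν := hsnellint k
    have hcondae : ∀ᵐ y ∂ν,
        |(ν[snell f C ν k | prefixSigma (Fin d → ℝ) T ((tF : ℕ) + 1)]) y| ≤ C :=
      condexp_abs_le (prefixSigma_le _) ν hcondint (snell_abs_le hC hbdd k)
    have hA2eq : ∫ y in A2, snell f C ν (k + 1) y ∂ν = ∫ y in A2, snell f C ν k y ∂ν := by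
      have e1 : ∫ y in A2, snell f C ν (k + 1) y ∂ν
          = ∫ y in A2, trunc C ((ν[snell f C ν k |
              prefixSigma (Fin d → ℝ) T ((tF : ℕ) + 1)]) y) ∂ν := by
        refine setIntegral_congr_fun hA2m fun y hy => ?_
        rw [hA2def, Set.mem_setOf_eq] at hy
        have hlt : tF < tstar f C ν hT y := by
          rw [Fin.lt_iff_val_lt_val]
          show ((tF : Fin T) : ℕ) < ((tstar f C ν hT y : Fin T) : ℕ)
          have : ((tF : Fin T) : ℕ) = T - 1 - (k + 1) := rfl
          omega
        have hne := tstar_min (f := f) (C := C) (ν := ν) hT y hlt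
        rw [hVtF] at hne
        have hrec := congrFun hVtrec y
        rcases max_choice (f (y tF) tF)
          (trunc C ((ν[snell f C ν k | prefixSigma (Fin d → ℝ) T ((tF : ℕ) + 1)]) y)) with
          hmax | hmax
        · rw [hmax] at hrec
          exact absurd hrec.symm hne
        · rw [hmax] at hrec
          exact hrec
      have e2 : ∫ y in A2, trunc C ((ν[snell f C ν k |
            prefixSigma (Fin d → ℝ) T ((tF : ℕ) + 1)]) y) ∂ν
          = ∫ y in A2, (ν[snell f C ν k | prefixSigma (Fin d → ℝ) T ((tF : ℕ) + 1)]) y ∂ν := by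
        refine setIntegral_congr_ae hA2m ?_
        filter_upwards [hcondae] with y hy _
        exact trunc_eq hy
      have e3 : ∫ y in A2, (ν[snell f C ν k | prefixSigma (Fin d → ℝ) T ((tF : ℕ) + 1)]) y ∂ν
          = ∫ y in A2, snell f C ν k y ∂ν := by
        refine setIntegral_condExp (prefixSigma_le _) hcondint ?_
        rw [hA2def, ← hlvl]
        exact stoppingTime_ge_measurable hstop _
      rw [e1, e2, e3]
    rw [hA1eq, hA2eq]
    exact add_le_add le_rfl (ih hkT)

end OSR
end NuSide
section NuSide2
open MeasureTheory Set
namespace OSR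

variable {d T : ℕ} {f : (Fin d → ℝ) → Fin T → ℝ} {C : ℝ} {ν : Measure (PathSp d T)}

lemma isStoppingTime_const (t : Fin T) : IsStoppingTimePath (fun _ : PathSp d T => t) := by
  intro s
  by_cases h : t = s
  · have : {x : PathSp d T | (fun _ => t) x = s} = Set.univ := by
      ext x; simp [h]
    rw [this]
    exact @MeasurableSet.univ _ (prefixSigma (Fin d → ℝ) T ((s : ℕ) + 1))
  · have : {x : PathSp d T | (fun _ => t) x = s} = ∅ := by
      ext x; simp [h]
    rw [this]
    exact @MeasurableSet.empty _ (prefixSigma (Fin d → ℝ) T ((s : ℕ) + 1))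

lemma stopValue_set_bddAbove (hC : 0 ≤ C) (hbdd : ∀ u t, |f u t| ≤ C)
    (hfc : ∀ t : Fin T, Continuous (fun u => f u t)) [IsProbabilityMeasure ν] :
    BddAbove {r | ∃ τ : PathSp d T → Fin T, IsStoppingTimePath τ ∧
      r = ∫ x, f (x (τ x)) (τ x) ∂ν} := by
  refine ⟨C, fun r hr => ?_⟩
  obtain ⟨τ, hτ, rfl⟩ := hr
  have hint : Integrable (fun y => f (y (τ y)) (τ y)) ν :=
    integrable_of_bounded (stopPay_measurable hfc hτ).aestronglyMeasurable
      (fun y => hbdd _ _)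
  calc ∫ x, f (x (τ x)) (τ x) ∂ν ≤ ∫ _x, C ∂ν :=
        integral_mono hint (integrable_const C) (fun x => (abs_le.mp (hbdd _ _)).2)
    _ = C := by simp [measure_univ]

lemma le_stopValue_of_stopping (hC : 0 ≤ C) (hbdd : ∀ u t, |f u t| ≤ C)
    (hfc : ∀ t : Fin T, Continuous (fun u => f u t)) [IsProbabilityMeasure ν]
    {τ : PathSp d T → Fin T} (hτ : IsStoppingTimePath τ) :
    ∫ x, f (x (τ x)) (τ x) ∂ν ≤ stopValue f ν :=
  le_csSup (stopValue_set_bddAbove hC hbdd hfc) ⟨τ, hτ, rfl⟩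

lemma integral_snell_le_stopValue (hC : 0 ≤ C) (hbdd : ∀ u t, |f u t| ≤ C)
    (hfc : ∀ t : Fin T, Continuous (fun u => f u t)) (hT : 0 < T)
    [IsProbabilityMeasure ν] :
    ∫ y, snell f C ν (T - 1) y ∂ν ≤ stopValue f ν := by
  have h := snell_setIntegral_le (ν := ν) hC hbdd hfc hT (T - 1) (by omega)
  have huniv : {y : PathSp d T | T - 1 - (T - 1) ≤ ((tstar f C ν hT y : Fin T) : ℕ)}
      = Set.univ := by
    ext y; simp only [Set.mem_setOf_eq, Set.mem_univ, iff_true]; omega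
  rw [huniv, Measure.restrict_univ] at h
  exact h.trans (le_stopValue_of_stopping hC hbdd hfc (isStoppingTime_tstar hfc hT))

end OSR
end NuSide2
section JointSide
open MeasureTheory Set
namespace OSR

variable {d T : ℕ} {f : (Fin d → ℝ) → Fin T → ℝ} {C : ℝ} {ν : Measure (PathSp d T)}

lemma ystop_measurable (hfc : ∀ t : Fin T, Continuous (fun u => f u t))
    {τ : PathSp d T → Fin T} (hτ : IsStoppingTimePath τ) :
    Measurable (fun p : PathSp d T × PathSp d T => f (p.2 (τ p.1)) (τ p.1)) := by
  have hsum : (fun p : PathSp d T × PathSp d T => f (p.2 (τ p.1)) (τ p.1))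
      = fun p => ∑ t : Fin T,
          Set.indicator {p : PathSp d T × PathSp d T | τ p.1 = t}
            (fun p => f (p.2 t) t) p := by
    funext p
    rw [Finset.sum_eq_single (τ p.1)]
    · simp [Set.indicator_of_mem, Set.mem_setOf_eq]
    · intro t _ ht
      exact Set.indicator_of_notMem (by simpa [Set.mem_setOf_eq] using (Ne.symm ht)) _
    · simp
  rw [hsum]
  refine Finset.measurable_sum _ fun t _ => ?_
  refine Measurable.indicator ?_ ?_
  · exact (hfc t).measurable.comp ((measurable_pi_apply t).comp measurable_snd)
  · exact measurable_fst (prefixSigma_le _ _ (hτ t))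

lemma sup_comap_le_ambient (n : ℕ) :
    ((prefixSigma (Fin d → ℝ) T n).comap Prod.fst ⊔ (prefixSigma (Fin d → ℝ) T n).comap Prod.snd
      : MeasurableSpace (PathSp d T × PathSp d T))
      ≤ (inferInstance : MeasurableSpace (PathSp d T × PathSp d T)) :=
  sup_le ((MeasurableSpace.comap_mono (prefixSigma_le n)).trans measurable_fst.comap_le)
    ((MeasurableSpace.comap_mono (prefixSigma_le n)).trans measurable_snd.comap_le)

lemma joint_setIntegral_le (hC : 0 ≤ C) (hbdd : ∀ u t, |f u t| ≤ C)
    (hfc : ∀ t : Fin T, Continuous (fun u => f u t)) (hT : 0 < T)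
    [IsProbabilityMeasure ν]
    (π : Measure (PathSp d T × PathSp d T)) [IsProbabilityMeasure π]
    (hsnd : π.map Prod.snd = ν)
    (hcaus : ∀ t : ℕ, 1 ≤ t → t ≤ T - 1 → ∀ g : PathSp d T → ℝ, Measurable g →
      (∃ c, ∀ y, |g y| ≤ c) →
      π[fun p => g p.2 | ((prefixSigma (Fin d → ℝ) T t).comap Prod.fst) ⊔
          ((prefixSigma (Fin d → ℝ) T t).comap Prod.snd)]
        =ᵐ[π] π[fun p => g p.2 | (prefixSigma (Fin d → ℝ) T t).comap Prod.snd])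
    {τ : PathSp d T → Fin T} (hτ : IsStoppingTimePath τ) :
    ∀ k, k < T →
      ∫ p in {p : PathSp d T × PathSp d T | T - 1 - k ≤ ((τ p.1 : Fin T) : ℕ)},
          f (p.2 (τ p.1)) (τ p.1) ∂π
        ≤ ∫ p in {p : PathSp d T × PathSp d T | T - 1 - k ≤ ((τ p.1 : Fin T) : ℕ)},
            snell f C ν k p.2 ∂π := by
  have hyint : Integrable (fun p : PathSp d T × PathSp d T => f (p.2 (τ p.1)) (τ p.1)) π :=
    integrable_of_bounded (ystop_measurable hfc hτ).aestronglyMeasurable (fun p => hbdd _ _)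
  have hsnellint : ∀ j, Integrable (fun p : PathSp d T × PathSp d T => snell f C ν j p.2) π :=
    fun j => integrable_of_bounded
      ((snell_measurable hfc j).comp measurable_snd).aestronglyMeasurable
      (fun p => snell_abs_le hC hbdd j p.2)
  have hsetm : ∀ n : ℕ, MeasurableSet
      {p : PathSp d T × PathSp d T | n ≤ ((τ p.1 : Fin T) : ℕ)} := by
    intro n
    have : {p : PathSp d T × PathSp d T | n ≤ ((τ p.1 : Fin T) : ℕ)}
        = Prod.fst ⁻¹' {x : PathSp d T | n ≤ ((τ x : Fin T) : ℕ)} := rfl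
    rw [this]
    exact measurable_fst (prefixSigma_le _ _ (stoppingTime_ge_measurable hτ n))
  intro k
  induction k with
  | zero =>
    intro _
    refine le_of_eq (setIntegral_congr_fun (hsetm (T - 1 - 0)) fun p hp => ?_)
    have hp' : τ p.1 = ⟨T - 1, by omega⟩ := by
      apply Fin.ext
      have h2 : ((τ p.1 : Fin T) : ℕ) < T := (τ p.1).2
      have h1 : T - 1 - 0 ≤ ((τ p.1 : Fin T) : ℕ) := hp
      show ((τ p.1 : Fin T) : ℕ) = T - 1
      omega
    rw [hp']
    show f (p.2 ⟨T - 1, by omega⟩) ⟨T - 1, by omega⟩ = snell f C ν 0 p.2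
    simp [snell, dif_pos hT]
  | succ k ih =>
    intro hk1
    have hkT : k < T := by omega
    set tF : Fin T := ⟨T - 1 - (k + 1), by omega⟩ with htF
    set A1 : Set (PathSp d T × PathSp d T) := {p | τ p.1 = tF} with hA1def
    set A2 : Set (PathSp d T × PathSp d T) :=
      {p | T - 1 - k ≤ ((τ p.1 : Fin T) : ℕ)} with hA2def
    have hA1m : MeasurableSet A1 := by
      have : A1 = Prod.fst ⁻¹' {x : PathSp d T | τ x = tF} := rfl
      rw [this]
      exact measurable_fst (prefixSigma_le _ _ (hτ tF))
    have hA2m : MeasurableSet A2 := hsetm (T - 1 - k)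
    have hsplit : {p : PathSp d T × PathSp d T | T - 1 - (k + 1) ≤ ((τ p.1 : Fin T) : ℕ)}
        = A1 ∪ A2 := by
      ext p
      have hval : (τ p.1 = tF) ↔ ((τ p.1 : Fin T) : ℕ) = T - 1 - (k + 1) := by
        rw [Fin.ext_iff]
      simp only [Set.mem_setOf_eq, Set.mem_union, hA1def, hA2def, hval]
      omega
    have hdisj : Disjoint A1 A2 := by
      rw [Set.disjoint_left]
      intro p hp1 hp2
      rw [hA1def, Set.mem_setOf_eq] at hp1
      rw [hA2def, Set.mem_setOf_eq] at hp2
      have : ((τ p.1 : Fin T) : ℕ) = T - 1 - (k + 1) := by rw [hp1]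
      omega
    rw [hsplit]
    rw [setIntegral_union hdisj hA2m hyint.integrableOn hyint.integrableOn,
      setIntegral_union hdisj hA2m (hsnellint (k+1)).integrableOn
        (hsnellint (k+1)).integrableOn]
    -- notation
    have htF1 : ((tF : Fin T) : ℕ) + 1 < T := by show T - 1 - (k+1) + 1 < T; omega
    have hVtF : Vt f C ν tF = snell f C ν (k + 1) := by
      have h1 : T - 1 - ((tF : Fin T) : ℕ) = k + 1 := by
        show T - 1 - (T - 1 - (k + 1)) = k + 1; omega
      unfold Vt; rw [h1]
    have hVtF' : Vt f C ν ⟨(tF : ℕ) + 1, htF1⟩ = snell f C ν k := by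
      have h1 : T - 1 - (((⟨(tF : ℕ) + 1, htF1⟩ : Fin T)) : ℕ) = k := by
        show T - 1 - (T - 1 - (k + 1) + 1) = k; omega
      unfold Vt; rw [h1]
    have hVtrec := Vt_rec (f := f) (C := C) (ν := ν) tF htF1
    rw [hVtF, hVtF'] at hVtrec
    have hlvl : ((tF : Fin T) : ℕ) + 1 = T - 1 - k := by
      show T - 1 - (k+1) + 1 = T - 1 - k; omega
    -- A1 part
    have hA1le : ∫ p in A1, f (p.2 (τ p.1)) (τ p.1) ∂π
        ≤ ∫ p in A1, snell f C ν (k + 1) p.2 ∂π := by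
      refine setIntegral_mono_on hyint.integrableOn (hsnellint (k+1)).integrableOn hA1m
        fun p hp => ?_
      rw [hA1def, Set.mem_setOf_eq] at hp
      rw [hp, ← hVtF]
      exact f_le_Vt tF p.2
    -- A2 part
    have hcondνint : Integrable (snell f C ν k) ν :=
      integrable_of_bounded (snell_measurable hfc k).aestronglyMeasurable
        (snell_abs_le hC hbdd k)
    have hcondνmap : Integrable (snell f C ν k) (π.map Prod.snd) := by
      rw [hsnd]; exact hcondνint
    -- a.e. bound for the ν-conditional expectation, transported to π
    have hboundν : ∀ᵐ y ∂ν, |(ν[snell f C ν k | prefixSigma (Fin d → ℝ) T ((tF : ℕ) + 1)]) y| ≤ C :=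
      condexp_abs_le (prefixSigma_le _) ν hcondνint (snell_abs_le hC hbdd k)
    have hboundπ : ∀ᵐ p ∂π, |(ν[snell f C ν k | prefixSigma (Fin d → ℝ) T ((tF : ℕ) + 1)]) p.2| ≤ C := by
      have := ae_of_ae_map (measurable_snd.aemeasurable (μ := π))
        (by rw [hsnd]; exact hboundν :
          ∀ᵐ y ∂(π.map Prod.snd), |(ν[snell f C ν k | prefixSigma (Fin d → ℝ) T ((tF : ℕ) + 1)]) y| ≤ C)
      exact this
    have hA2G : MeasurableSet[(prefixSigma (Fin d → ℝ) T ((tF : ℕ) + 1)).comap Prod.fst ⊔ (prefixSigma (Fin d → ℝ) T ((tF : ℕ) + 1)).comap Prod.snd] A2 := by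
      have h1 : MeasurableSet[prefixSigma (Fin d → ℝ) T ((tF : ℕ) + 1)]
          {x : PathSp d T | T - 1 - k ≤ ((τ x : Fin T) : ℕ)} := by
        rw [hlvl]
        exact stoppingTime_ge_measurable hτ _
      have h2 : MeasurableSet[MeasurableSpace.comap Prod.fst
          (prefixSigma (Fin d → ℝ) T ((tF : ℕ) + 1))] A2 := ⟨_, h1, rfl⟩
      exact (le_sup_left :
        MeasurableSpace.comap Prod.fst (prefixSigma (Fin d → ℝ) T ((tF : ℕ) + 1)) ≤
          MeasurableSpace.comap Prod.fst (prefixSigma (Fin d → ℝ) T ((tF : ℕ) + 1)) ⊔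
          MeasurableSpace.comap Prod.snd (prefixSigma (Fin d → ℝ) T ((tF : ℕ) + 1))) _ h2
    have e1 : ∫ p in A2, snell f C ν k p.2 ∂π
        = ∫ p in A2, (π[fun p : PathSp d T × PathSp d T => snell f C ν k p.2 |
            (prefixSigma (Fin d → ℝ) T ((tF : ℕ) + 1)).comap Prod.fst ⊔ (prefixSigma (Fin d → ℝ) T ((tF : ℕ) + 1)).comap Prod.snd]) p ∂π :=
      (setIntegral_condExp (sup_comap_le_ambient _) (hsnellint k) hA2G).symm
    have e2 : ∫ p in A2, (π[fun p : PathSp d T × PathSp d T => snell f C ν k p.2 |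
            (prefixSigma (Fin d → ℝ) T ((tF : ℕ) + 1)).comap Prod.fst ⊔ (prefixSigma (Fin d → ℝ) T ((tF : ℕ) + 1)).comap Prod.snd]) p ∂π
        = ∫ p in A2, (π[fun p : PathSp d T × PathSp d T => snell f C ν k p.2 |
            (prefixSigma (Fin d → ℝ) T ((tF : ℕ) + 1)).comap Prod.snd]) p ∂π := by
      refine setIntegral_congr_ae hA2m ?_
      have hae := hcaus ((tF : ℕ) + 1) (by omega) (by omega) (snell f C ν k)
        (snell_measurable hfc k) ⟨C, snell_abs_le hC hbdd k⟩
      filter_upwards [hae] with p hp _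
      exact hp
    have e3 : ∫ p in A2, (π[fun p : PathSp d T × PathSp d T => snell f C ν k p.2 |
            (prefixSigma (Fin d → ℝ) T ((tF : ℕ) + 1)).comap Prod.snd]) p ∂π
        = ∫ p in A2, (ν[snell f C ν k | prefixSigma (Fin d → ℝ) T ((tF : ℕ) + 1)]) p.2 ∂π := by
      refine setIntegral_congr_ae hA2m ?_
      have hae := condexp_map (prefixSigma_le ((tF : ℕ) + 1)) measurable_snd π hcondνmap
      rw [hsnd] at hae
      filter_upwards [hae] with p hp _
      exact hp.symm
    have e4 : ∫ p in A2, (ν[snell f C ν k | prefixSigma (Fin d → ℝ) T ((tF : ℕ) + 1)]) p.2 ∂π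
        = ∫ p in A2, trunc C ((ν[snell f C ν k | prefixSigma (Fin d → ℝ) T ((tF : ℕ) + 1)]) p.2) ∂π := by
      refine setIntegral_congr_ae hA2m ?_
      filter_upwards [hboundπ] with p hp _
      exact (trunc_eq hp).symm
    have htruncint : Integrable (fun p : PathSp d T × PathSp d T =>
        trunc C ((ν[snell f C ν k | prefixSigma (Fin d → ℝ) T ((tF : ℕ) + 1)]) p.2)) π := by
      refine integrable_of_bounded ?_ (fun p => abs_trunc_le hC _)
      have h1 : Measurable (ν[snell f C ν k | prefixSigma (Fin d → ℝ) T ((tF : ℕ) + 1)]) :=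
        ((stronglyMeasurable_condExp (m := prefixSigma (Fin d → ℝ) T ((tF : ℕ) + 1))).mono (prefixSigma_le _)).measurable
      exact (measurable_trunc_comp (h1.comp measurable_snd)).aestronglyMeasurable
    have e5 : ∫ p in A2, trunc C ((ν[snell f C ν k | prefixSigma (Fin d → ℝ) T ((tF : ℕ) + 1)]) p.2) ∂π
        ≤ ∫ p in A2, snell f C ν (k + 1) p.2 ∂π := by
      refine setIntegral_mono_on htruncint.integrableOn
        (hsnellint (k+1)).integrableOn hA2m fun p _ => ?_
      have := congrFun hVtrec p.2
      rw [this]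
      exact le_max_right _ _
    have hA2le : ∫ p in A2, f (p.2 (τ p.1)) (τ p.1) ∂π
        ≤ ∫ p in A2, snell f C ν (k + 1) p.2 ∂π := by
      calc ∫ p in A2, f (p.2 (τ p.1)) (τ p.1) ∂π
          ≤ ∫ p in A2, snell f C ν k p.2 ∂π := ih hkT
        _ = _ := e1
        _ = _ := e2
        _ = _ := e3
        _ = _ := e4
        _ ≤ _ := e5
    exact add_le_add hA1le hA2le

end OSR
end JointSide
section Analysis
open MeasureTheory Set
namespace OSR

lemma sq_integral_le {α : Type*} [MeasurableSpace α] (μ : Measure α) [IsProbabilityMeasure μ]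
    {g : α → ℝ} (hgi : Integrable g μ) (hg2i : Integrable (fun x => g x ^ 2) μ) :
    (∫ x, g x ∂μ) ^ 2 ≤ ∫ x, g x ^ 2 ∂μ := by
  set c := ∫ x, g x ∂μ with hc
  have h0 : 0 ≤ ∫ x, (g x - c) ^ 2 ∂μ := integral_nonneg fun x => sq_nonneg _
  have hexp : (fun x => (g x - c) ^ 2) = fun x => g x ^ 2 - (2 * c) * g x + c ^ 2 := by
    funext x; ring
  rw [hexp] at h0
  have ha : Integrable (fun x => g x ^ 2 - 2 * c * g x) μ := hg2i.sub (hgi.const_mul _)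
  rw [integral_add ha (integrable_const _),
    integral_sub hg2i (hgi.const_mul (2 * c)), integral_const_mul, integral_const] at h0
  simp only [measure_univ, ENNReal.toReal_one, Measure.real, smul_eq_mul, one_mul] at h0
  nlinarith [h0]

lemma integral_sqrt_le {α : Type*} [MeasurableSpace α] (μ : Measure α) [IsProbabilityMeasure μ]
    {S : α → ℝ} (hS0 : ∀ x, 0 ≤ S x) (hSi : Integrable S μ) :
    ∫ x, Real.sqrt (S x) ∂μ ≤ Real.sqrt (∫ x, S x ∂μ) := by
  have hgm : AEStronglyMeasurable (fun x => Real.sqrt (S x)) μ :=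
    Real.continuous_sqrt.comp_aestronglyMeasurable hSi.aestronglyMeasurable
  have hbnd : ∀ x, ‖Real.sqrt (S x)‖ ≤ 1 + S x := by
    intro x
    rw [Real.norm_eq_abs, abs_of_nonneg (Real.sqrt_nonneg _)]
    nlinarith [Real.sq_sqrt (hS0 x), Real.sqrt_nonneg (S x)]
  have hgi : Integrable (fun x => Real.sqrt (S x)) μ :=
    Integrable.mono' ((integrable_const 1).add hSi) hgm (Filter.Eventually.of_forall hbnd)
  have hg2 : (fun x => Real.sqrt (S x) ^ 2) = S := by
    funext x; exact Real.sq_sqrt (hS0 x)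
  have hg2i : Integrable (fun x => Real.sqrt (S x) ^ 2) μ := by rw [hg2]; exact hSi
  have hsq := sq_integral_le μ hgi hg2i
  rw [hg2] at hsq
  have h0 : 0 ≤ ∫ x, Real.sqrt (S x) ∂μ := integral_nonneg fun x => Real.sqrt_nonneg _
  calc ∫ x, Real.sqrt (S x) ∂μ = Real.sqrt ((∫ x, Real.sqrt (S x) ∂μ) ^ 2) :=
        (Real.sqrt_sq h0).symm
    _ ≤ Real.sqrt (∫ x, S x ∂μ) := Real.sqrt_le_sqrt hsq

variable {d T : ℕ}

lemma f_continuous {f : (Fin d → ℝ) → Fin T → ℝ} {Lip : ℝ}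
    (hlip : ∀ (t : Fin T) (u v : Fin d → ℝ),
      |f u t - f v t| ≤ Lip * Real.sqrt (∑ i, (u i - v i) ^ 2)) (t : Fin T) :
    Continuous (fun u => f u t) := by
  rw [continuous_iff_continuousAt]
  intro v
  rw [ContinuousAt, tendsto_iff_dist_tendsto_zero]
  have hφ : Continuous (fun u : Fin d → ℝ => Lip * Real.sqrt (∑ i, (u i - v i) ^ 2)) := by
    refine continuous_const.mul (Real.continuous_sqrt.comp ?_)
    exact continuous_finset_sum _ fun i _ => ((continuous_apply i).sub continuous_const).pow 2
  have hφ0 : Filter.Tendsto (fun u : Fin d → ℝ => Lip * Real.sqrt (∑ i, (u i - v i) ^ 2))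
      (nhds v) (nhds 0) := by
    have := hφ.tendsto v
    simpa using this
  refine squeeze_zero (fun u => dist_nonneg) (fun u => ?_) hφ0
  rw [Real.dist_eq]
  exact hlip t u v

/-- The quadratic cost function on the product space. -/
lemma cost_measurable : Measurable (fun p : PathSp d T × PathSp d T =>
    ∑ t, ∑ i, (p.1 t i - p.2 t i) ^ 2) := by
  refine Finset.measurable_sum _ fun t _ => Finset.measurable_sum _ fun i _ => ?_
  refine Measurable.pow_const ?_ 2
  fun_prop

lemma moment_measurable : Measurable (fun x : PathSp d T => ∑ t, ∑ i, (x t i) ^ 2) := by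
  refine Finset.measurable_sum _ fun t _ => Finset.measurable_sum _ fun i _ => ?_
  exact Measurable.pow_const ((measurable_pi_apply i).comp (measurable_pi_apply t)) 2

lemma cost_integrable {μ ν : Measure (PathSp d T)}
    (π : Measure (PathSp d T × PathSp d T)) [IsProbabilityMeasure π]
    (hfst : π.map Prod.fst = μ) (hsnd : π.map Prod.snd = ν)
    (hμ : FinSndMoment μ) (hν : FinSndMoment ν) :
    Integrable (fun p : PathSp d T × PathSp d T =>
      ∑ t, ∑ i, (p.1 t i - p.2 t i) ^ 2) π := by
  have hμ' : Integrable (fun x : PathSp d T => ∑ t, ∑ i, (x t i) ^ 2) (π.map Prod.fst) := by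
    rw [hfst]; exact hμ
  have hν' : Integrable (fun x : PathSp d T => ∑ t, ∑ i, (x t i) ^ 2) (π.map Prod.snd) := by
    rw [hsnd]; exact hν
  have hQ1 : Integrable (fun p : PathSp d T × PathSp d T => ∑ t, ∑ i, (p.1 t i) ^ 2) π :=
    (integrable_map_measure moment_measurable.aestronglyMeasurable
      measurable_fst.aemeasurable).mp hμ'
  have hQ2 : Integrable (fun p : PathSp d T × PathSp d T => ∑ t, ∑ i, (p.2 t i) ^ 2) π :=
    (integrable_map_measure moment_measurable.aestronglyMeasurable
      measurable_snd.aemeasurable).mp hν'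
  refine Integrable.mono' (((hQ1.const_mul 2)).add ((hQ2.const_mul 2)))
    cost_measurable.aestronglyMeasurable (Filter.Eventually.of_forall fun p => ?_)
  rw [Real.norm_eq_abs, abs_of_nonneg (Finset.sum_nonneg fun t _ =>
    Finset.sum_nonneg fun i _ => sq_nonneg _)]
  have : ∀ t : Fin T, ∑ i, (p.1 t i - p.2 t i) ^ 2
      ≤ ∑ i, (2 * (p.1 t i) ^ 2 + 2 * (p.2 t i) ^ 2) :=
    fun t => Finset.sum_le_sum fun i _ => by nlinarith [sq_nonneg (p.1 t i + p.2 t i)]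
  calc ∑ t, ∑ i, (p.1 t i - p.2 t i) ^ 2
      ≤ ∑ t, ∑ i, (2 * (p.1 t i) ^ 2 + 2 * (p.2 t i) ^ 2) :=
        Finset.sum_le_sum fun t _ => this t
    _ = 2 * (∑ t, ∑ i, (p.1 t i) ^ 2) + 2 * (∑ t, ∑ i, (p.2 t i) ^ 2) := by
        rw [Finset.mul_sum, Finset.mul_sum, ← Finset.sum_add_distrib]
        refine Finset.sum_congr rfl fun t _ => ?_
        rw [Finset.mul_sum, Finset.mul_sum, ← Finset.sum_add_distrib]
    _ = _ := by simp only [Pi.add_apply]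

lemma pay_diff_le {f : (Fin d → ℝ) → Fin T → ℝ} {Lip : ℝ} (hLip : 0 ≤ Lip)
    (hlip : ∀ (t : Fin T) (u v : Fin d → ℝ),
      |f u t - f v t| ≤ Lip * Real.sqrt (∑ i, (u i - v i) ^ 2))
    (s : Fin T) (p : PathSp d T × PathSp d T) :
    |f (p.1 s) s - f (p.2 s) s|
      ≤ Lip * Real.sqrt (∑ t, ∑ i, (p.1 t i - p.2 t i) ^ 2) := by
  refine (hlip s (p.1 s) (p.2 s)).trans ?_
  refine mul_le_mul_of_nonneg_left (Real.sqrt_le_sqrt ?_) hLip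
  exact Finset.single_le_sum (f := fun t => ∑ i, (p.1 t i - p.2 t i) ^ 2)
    (fun t _ => Finset.sum_nonneg fun i _ => sq_nonneg _) (Finset.mem_univ s)

end OSR
end Analysis
section Core
open MeasureTheory Set
namespace OSR

/-- Transport of the first-coordinate causality condition through `Prod.swap`. -/
lemma swap_causality {β : Type*} {m : MeasurableSpace β} [mβ : MeasurableSpace β]
    (hm : m ≤ mβ) (π : Measure (β × β)) [IsProbabilityMeasure π]
    {g : β → ℝ} (hg : Measurable g) {c : ℝ} (hb : ∀ x, |g x| ≤ c)
    (h : π[fun p => g p.1 | m.comap Prod.fst ⊔ m.comap Prod.snd]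
      =ᵐ[π] π[fun p => g p.1 | m.comap Prod.fst]) :
    (π.map Prod.swap)[fun p => g p.2 | m.comap Prod.fst ⊔ m.comap Prod.snd]
      =ᵐ[π.map Prod.swap] (π.map Prod.swap)[fun p => g p.2 | m.comap Prod.snd] := by
  have hsup : (m.comap Prod.fst ⊔ m.comap Prod.snd : MeasurableSpace (β × β))
      ≤ (inferInstance : MeasurableSpace (β × β)) :=
    sup_le ((MeasurableSpace.comap_mono hm).trans measurable_fst.comap_le)
      ((MeasurableSpace.comap_mono hm).trans measurable_snd.comap_le)
  have hsndle : (m.comap Prod.snd : MeasurableSpace (β × β))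
      ≤ (inferInstance : MeasurableSpace (β × β)) :=
    (MeasurableSpace.comap_mono hm).trans measurable_snd.comap_le
  haveI : IsProbabilityMeasure (π.map Prod.swap) :=
    Measure.isProbabilityMeasure_map measurable_swap.aemeasurable
  -- σ-algebra identities under swap
  have hfstswap : (Prod.fst ∘ (Prod.swap : β × β → β × β)) = Prod.snd := rfl
  have hsndswap : (Prod.snd ∘ (Prod.swap : β × β → β × β)) = Prod.fst := rfl
  have hGswap : (m.comap Prod.fst ⊔ m.comap Prod.snd :
      MeasurableSpace (β × β)).comap Prod.swap = m.comap Prod.fst ⊔ m.comap Prod.snd := by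
    rw [MeasurableSpace.comap_sup, MeasurableSpace.comap_comp, MeasurableSpace.comap_comp,
      hfstswap, hsndswap]
    exact sup_comm _ _
  have hSswap : (m.comap Prod.snd : MeasurableSpace (β × β)).comap Prod.swap
      = m.comap Prod.fst := by
    rw [MeasurableSpace.comap_comp, hsndswap]
  have hgint : Integrable (fun p : β × β => g p.2) (π.map Prod.swap) :=
    integrable_of_bounded ((hg.comp measurable_snd).aestronglyMeasurable)
      (fun p => hb p.2)
  -- composed a.e. identities over π
  have e1 : (fun a : β × β => ((π.map Prod.swap)[fun p : β × β => g p.2 |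
        m.comap Prod.fst ⊔ m.comap Prod.snd]) (Prod.swap a))
      =ᵐ[π] π[(fun a : β × β => g (Prod.swap a).2) |
        (m.comap Prod.fst ⊔ m.comap Prod.snd).comap Prod.swap] :=
    condexp_map hsup measurable_swap π hgint
  have e2 : (fun a : β × β => ((π.map Prod.swap)[fun p : β × β => g p.2 |
        m.comap Prod.snd]) (Prod.swap a))
      =ᵐ[π] π[(fun a : β × β => g (Prod.swap a).2) |
        (m.comap Prod.snd : MeasurableSpace (β × β)).comap Prod.swap] :=
    condexp_map hsndle measurable_swap π hgint
  rw [hGswap] at e1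
  rw [hSswap] at e2
  have hswap2 : (fun a : β × β => g (Prod.swap a).2) = fun a : β × β => g a.1 := rfl
  rw [hswap2] at e1 e2
  -- hence the two swapped candidates agree π-a.e.
  have key : (fun a : β × β => ((π.map Prod.swap)[fun p : β × β => g p.2 |
        m.comap Prod.fst ⊔ m.comap Prod.snd]) (Prod.swap a))
      =ᵐ[π] (fun a : β × β => ((π.map Prod.swap)[fun p : β × β => g p.2 |
        m.comap Prod.snd]) (Prod.swap a)) :=
    e1.trans (h.trans e2.symm)
  -- transfer back along the map
  set F1 := (π.map Prod.swap)[fun p : β × β => g p.2 |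
    m.comap Prod.fst ⊔ m.comap Prod.snd] with hF1
  set F2 := (π.map Prod.swap)[fun p : β × β => g p.2 | m.comap Prod.snd] with hF2
  have hF1m : Measurable F1 :=
    ((stronglyMeasurable_condExp).mono hsup).measurable
  have hF2m : Measurable F2 :=
    ((stronglyMeasurable_condExp).mono hsndle).measurable
  have hEm : MeasurableSet {p : β × β | F1 p ≠ F2 p} :=
    (measurableSet_eq_fun hF1m hF2m).compl
  rw [Filter.EventuallyEq, ae_iff]
  rw [Measure.map_apply measurable_swap (by exact hEm)]
  have hpre : Prod.swap ⁻¹' {p : β × β | ¬ F1 p = F2 p}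
      = {a : β × β | ¬ F1 (Prod.swap a) = F2 (Prod.swap a)} := rfl
  rw [hpre]
  have := key
  rw [Filter.EventuallyEq, ae_iff] at this
  exact this

variable {d T : ℕ}

/-- Core one-sided estimate. -/
lemma core_le (f : (Fin d → ℝ) → Fin T → ℝ) (Lip C : ℝ) (hC : 0 ≤ C) (hLip : 0 ≤ Lip)
    (hbdd : ∀ u t, |f u t| ≤ C)
    (hlip : ∀ (t : Fin T) (u v : Fin d → ℝ),
      |f u t - f v t| ≤ Lip * Real.sqrt (∑ i, (u i - v i) ^ 2))
    (hT : 0 < T)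
    (μ ν : Measure (PathSp d T)) [IsProbabilityMeasure μ] [IsProbabilityMeasure ν]
    (hμ : FinSndMoment μ) (hν : FinSndMoment ν)
    (π : Measure (PathSp d T × PathSp d T)) [IsProbabilityMeasure π]
    (hfst : π.map Prod.fst = μ) (hsnd : π.map Prod.snd = ν)
    (hcaus : ∀ t : ℕ, 1 ≤ t → t ≤ T - 1 → ∀ g : PathSp d T → ℝ, Measurable g →
      (∃ c, ∀ y, |g y| ≤ c) →
      π[fun p => g p.2 | ((prefixSigma (Fin d → ℝ) T t).comap Prod.fst) ⊔
          ((prefixSigma (Fin d → ℝ) T t).comap Prod.snd)]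
        =ᵐ[π] π[fun p => g p.2 | (prefixSigma (Fin d → ℝ) T t).comap Prod.snd]) :
    stopValue f μ ≤ stopValue f ν
      + Lip * Real.sqrt (∫ p, ∑ t, ∑ i, (p.1 t i - p.2 t i) ^ 2 ∂π) := by
  have hfc : ∀ t : Fin T, Continuous (fun u => f u t) := f_continuous hlip
  set S : PathSp d T × PathSp d T → ℝ :=
    fun p => ∑ t, ∑ i, (p.1 t i - p.2 t i) ^ 2 with hS
  have hS0 : ∀ p, 0 ≤ S p := fun p =>
    Finset.sum_nonneg fun t _ => Finset.sum_nonneg fun i _ => sq_nonneg _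
  have hSint : Integrable S π := cost_integrable π hfst hsnd hμ hν
  have hsqrtm : AEStronglyMeasurable (fun p => Real.sqrt (S p)) π :=
    Real.continuous_sqrt.comp_aestronglyMeasurable hSint.aestronglyMeasurable
  have hsqrtint : Integrable (fun p => Real.sqrt (S p)) π := by
    refine Integrable.mono' ((integrable_const 1).add hSint) hsqrtm
      (Filter.Eventually.of_forall fun p => ?_)
    rw [Real.norm_eq_abs, abs_of_nonneg (Real.sqrt_nonneg _)]
    simp only [Pi.add_apply]
    nlinarith [Real.sq_sqrt (hS0 p), Real.sqrt_nonneg (S p)]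
  -- bound each stopping value of μ
  refine csSup_le ⟨∫ x, f (x ((fun _ => ⟨0, hT⟩) x)) ((fun _ => ⟨0, hT⟩) x) ∂μ,
    ⟨fun _ => ⟨0, hT⟩, isStoppingTime_const _, rfl⟩⟩ ?_
  rintro b ⟨τ, hτ, rfl⟩
  have hμpay : Integrable (fun x => f (x (τ x)) (τ x)) μ :=
    integrable_of_bounded (stopPay_measurable hfc hτ).aestronglyMeasurable
      (fun y => hbdd _ _)
  -- transfer to the product space
  have hxpaym : Measurable (fun p : PathSp d T × PathSp d T => f (p.1 (τ p.1)) (τ p.1)) :=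
    (stopPay_measurable hfc hτ).comp measurable_fst
  have hxpayint : Integrable (fun p : PathSp d T × PathSp d T => f (p.1 (τ p.1)) (τ p.1)) π :=
    integrable_of_bounded hxpaym.aestronglyMeasurable (fun p => hbdd _ _)
  have hypayint : Integrable (fun p : PathSp d T × PathSp d T => f (p.2 (τ p.1)) (τ p.1)) π :=
    integrable_of_bounded (ystop_measurable hfc hτ).aestronglyMeasurable (fun p => hbdd _ _)
  have h1 : ∫ x, f (x (τ x)) (τ x) ∂μ = ∫ p, f (p.1 (τ p.1)) (τ p.1) ∂π := by
    rw [← hfst]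
    rw [integral_map measurable_fst.aemeasurable
      (by rw [hfst]; exact (stopPay_measurable hfc hτ).aestronglyMeasurable)]
  have h2 : ∫ p, f (p.1 (τ p.1)) (τ p.1) ∂π
      ≤ ∫ p, f (p.2 (τ p.1)) (τ p.1) ∂π + Lip * ∫ p, Real.sqrt (S p) ∂π := by
    have hsub : ∫ p, f (p.1 (τ p.1)) (τ p.1) ∂π - ∫ p, f (p.2 (τ p.1)) (τ p.1) ∂π
        = ∫ p, (f (p.1 (τ p.1)) (τ p.1) - f (p.2 (τ p.1)) (τ p.1)) ∂π :=
      (integral_sub hxpayint hypayint).symm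
    have hmono : ∫ p, (f (p.1 (τ p.1)) (τ p.1) - f (p.2 (τ p.1)) (τ p.1)) ∂π
        ≤ ∫ p, Lip * Real.sqrt (S p) ∂π := by
      refine integral_mono (hxpayint.sub hypayint) (hsqrtint.const_mul Lip) fun p => ?_
      exact (le_abs_self _).trans (pay_diff_le hLip hlip (τ p.1) p)
    rw [integral_const_mul] at hmono
    linarith [hsub, hmono]
  have h3 : ∫ p, f (p.2 (τ p.1)) (τ p.1) ∂π ≤ ∫ p, snell f C ν (T - 1) p.2 ∂π := by
    have h := joint_setIntegral_le (ν := ν) hC hbdd hfc hT π hsnd hcaus hτ (T - 1) (by omega)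
    have huniv : {p : PathSp d T × PathSp d T | T - 1 - (T - 1) ≤ ((τ p.1 : Fin T) : ℕ)}
        = Set.univ := by
      ext p; simp only [Set.mem_setOf_eq, Set.mem_univ, iff_true]; omega
    rw [huniv, Measure.restrict_univ] at h
    exact h
  have h4 : ∫ p, snell f C ν (T - 1) p.2 ∂π = ∫ y, snell f C ν (T - 1) y ∂ν := by
    rw [← hsnd]
    rw [integral_map measurable_snd.aemeasurable
      (by rw [hsnd]; exact (snell_measurable hfc (T - 1)).aestronglyMeasurable)]
  have h5 : ∫ y, snell f C ν (T - 1) y ∂ν ≤ stopValue f ν :=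
    integral_snell_le_stopValue hC hbdd hfc hT
  have h6 : Lip * ∫ p, Real.sqrt (S p) ∂π ≤ Lip * Real.sqrt (∫ p, S p ∂π) :=
    mul_le_mul_of_nonneg_left (integral_sqrt_le π hS0 hSint) hLip
  calc ∫ x, f (x (τ x)) (τ x) ∂μ
      = ∫ p, f (p.1 (τ p.1)) (τ p.1) ∂π := h1
    _ ≤ ∫ p, f (p.2 (τ p.1)) (τ p.1) ∂π + Lip * ∫ p, Real.sqrt (S p) ∂π := h2
    _ ≤ ∫ y, snell f C ν (T - 1) y ∂ν + Lip * ∫ p, Real.sqrt (S p) ∂π := by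
        have := h3.trans (le_of_eq h4); linarith
    _ ≤ stopValue f ν + Lip * Real.sqrt (∫ p, S p ∂π) := by linarith [h5, h6]

end OSR
end Core
open MeasureTheory in
theorem optimal_stopping_robust' {d T : ℕ} (f : (Fin d → ℝ) → Fin T → ℝ) (Lip : ℝ)
    (hLip : 0 ≤ Lip)
    (hbdd : ∃ C, ∀ u t, |f u t| ≤ C)
    (hlip : ∀ (t : Fin T) (u v : Fin d → ℝ),
      |f u t - f v t| ≤ Lip * Real.sqrt (∑ i, (u i - v i) ^ 2))
    (μ ν : Measure (PathSp d T)) [IsProbabilityMeasure μ] [IsProbabilityMeasure ν]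
    (hμ : FinSndMoment μ) (hν : FinSndMoment ν) :
    |stopValue f μ - stopValue f ν| ≤ Lip * AW2 μ ν := by
  classical
  rcases hbdd with ⟨C₀, hC₀⟩
  by_cases hT : 0 < T
  swap
  · -- degenerate case `T = 0`: no stopping times exist
    have hT0 : T = 0 := by omega
    subst hT0
    have hempty : ∀ ρ : Measure (PathSp d 0),
        {r | ∃ τ : PathSp d 0 → Fin 0, IsStoppingTimePath τ ∧
          r = ∫ x, f (x (τ x)) (τ x) ∂ρ} = (∅ : Set ℝ) := by
      intro ρ
      ext r
      simp only [Set.mem_setOf_eq, Set.mem_empty_iff_false, iff_false, not_exists]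
      rintro τ ⟨hτ, -⟩
      exact Fin.elim0 (τ (fun t => Fin.elim0 t))
    rw [stopValue, stopValue, hempty μ, hempty ν, Real.sSup_empty]
    simp only [sub_zero, abs_zero]
    exact mul_nonneg hLip (Real.sqrt_nonneg _)
  · set C := max C₀ 0 with hCdef
    have hC : 0 ≤ C := le_max_right _ _
    have hbdd' : ∀ u t, |f u t| ≤ C := fun u t => (hC₀ u t).trans (le_max_left _ _)
    set Δ := stopValue f μ - stopValue f ν with hΔ
    set SSet : Set ℝ := {r | ∃ π : Measure (PathSp d T × PathSp d T),
      Bicausal π μ ν ∧ r = ∫ p, ∑ t, ∑ i, (p.1 t i - p.2 t i) ^ 2 ∂π} with hSSet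
    have key : ∀ r ∈ SSet, |Δ| ≤ Lip * Real.sqrt r ∧ 0 ≤ r := by
      rintro r ⟨π, ⟨⟨hfst, hsnd⟩, hbic⟩, rfl⟩
      haveI : IsProbabilityMeasure π := by
        constructor
        have : π.map Prod.fst Set.univ = μ Set.univ := by rw [hfst]
        rw [Measure.map_apply measurable_fst MeasurableSet.univ] at this
        simpa [measure_univ] using this
      have hcaus2 : ∀ t : ℕ, 1 ≤ t → t ≤ T - 1 → ∀ g : PathSp d T → ℝ, Measurable g →
          (∃ c, ∀ y, |g y| ≤ c) →
          π[fun p => g p.2 | ((prefixSigma (Fin d → ℝ) T t).comap Prod.fst) ⊔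
              ((prefixSigma (Fin d → ℝ) T t).comap Prod.snd)]
            =ᵐ[π] π[fun p => g p.2 | (prefixSigma (Fin d → ℝ) T t).comap Prod.snd] :=
        fun t h1 h2 g hg hb => (hbic t h1 h2).2 g hg hb
      have hfwd := OSR.core_le f Lip C hC hLip hbdd' hlip hT μ ν hμ hν π hfst hsnd hcaus2
      -- swap
      set π' := π.map Prod.swap with hπ'
      haveI : IsProbabilityMeasure π' :=
        Measure.isProbabilityMeasure_map measurable_swap.aemeasurable
      have hfst' : π'.map Prod.fst = ν := by
        rw [hπ', Measure.map_map measurable_fst measurable_swap]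
        exact hsnd
      have hsnd' : π'.map Prod.snd = μ := by
        rw [hπ', Measure.map_map measurable_snd measurable_swap]
        exact hfst
      have hcaus' : ∀ t : ℕ, 1 ≤ t → t ≤ T - 1 → ∀ g : PathSp d T → ℝ, Measurable g →
          (∃ c, ∀ y, |g y| ≤ c) →
          π'[fun p => g p.2 | ((prefixSigma (Fin d → ℝ) T t).comap Prod.fst) ⊔
              ((prefixSigma (Fin d → ℝ) T t).comap Prod.snd)]
            =ᵐ[π'] π'[fun p => g p.2 | (prefixSigma (Fin d → ℝ) T t).comap Prod.snd] := by
        rintro t h1 h2 g hg ⟨c, hb⟩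
        exact OSR.swap_causality (OSR.prefixSigma_le t) π hg hb ((hbic t h1 h2).1 g hg ⟨c, hb⟩)
      have hr' : ∫ p, ∑ t, ∑ i, (p.1 t i - p.2 t i) ^ 2 ∂π'
          = ∫ p, ∑ t, ∑ i, (p.1 t i - p.2 t i) ^ 2 ∂π := by
        rw [hπ', integral_map measurable_swap.aemeasurable
          (by
            rw [← hπ']
            have : Measurable (fun p : PathSp d T × PathSp d T =>
              ∑ t, ∑ i, (p.1 t i - p.2 t i) ^ 2) := OSR.cost_measurable
            exact ((this.comp measurable_swap).comp measurable_swap).aestronglyMeasurable)]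
        refine integral_congr_ae (Filter.Eventually.of_forall fun p => ?_)
        refine Finset.sum_congr rfl fun t _ => Finset.sum_congr rfl fun i _ => ?_
        show ((p.swap).1 t i - (p.swap).2 t i) ^ 2 = (p.1 t i - p.2 t i) ^ 2
        simp only [Prod.fst_swap, Prod.snd_swap]
        ring
      have hbwd := OSR.core_le f Lip C hC hLip hbdd' hlip hT ν μ hν hμ π' hfst' hsnd' hcaus'
      rw [hr'] at hbwd
      have hr0 : 0 ≤ ∫ p, ∑ t, ∑ i, (p.1 t i - p.2 t i) ^ 2 ∂π :=
        integral_nonneg fun p =>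
          Finset.sum_nonneg fun t _ => Finset.sum_nonneg fun i _ => sq_nonneg _
      refine ⟨abs_le.mpr ⟨?_, ?_⟩, hr0⟩
      · rw [hΔ]; linarith [hbwd]
      · rw [hΔ]; linarith [hfwd]
    have hne : SSet.Nonempty :=
      ⟨∫ p, ∑ t, ∑ i, (p.1 t i - p.2 t i) ^ 2 ∂(μ.prod ν),
        μ.prod ν, OSR.bicausal_prod μ ν, rfl⟩
    have hAW : AW2 μ ν = Real.sqrt (sInf SSet) := by
      rw [AW2, AW2sq]
    by_cases hLip0 : Lip = 0
    · obtain ⟨r₀, hr₀⟩ := hne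
      have h := (key r₀ hr₀).1
      rw [hLip0] at h ⊢
      simpa using h
    · have hLippos : 0 < Lip := lt_of_le_of_ne hLip (Ne.symm hLip0)
      have h1 : (|Δ| / Lip) ^ 2 ≤ sInf SSet := by
        refine le_csInf hne fun r hr => ?_
        obtain ⟨h2, hr0⟩ := key r hr
        have h3 : |Δ| / Lip ≤ Real.sqrt r := by
          rw [div_le_iff₀ hLippos]
          linarith [h2]
        calc (|Δ| / Lip) ^ 2 ≤ Real.sqrt r ^ 2 :=
              pow_le_pow_left₀ (div_nonneg (abs_nonneg _) hLip) h3 2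
          _ = r := Real.sq_sqrt hr0
      have h4 : |Δ| / Lip ≤ Real.sqrt (sInf SSet) := by
        have := Real.sqrt_le_sqrt h1
        rwa [Real.sqrt_sq (div_nonneg (abs_nonneg _) hLip)] at this
      rw [hAW]
      calc |Δ| = Lip * (|Δ| / Lip) := by field_simp
        _ ≤ Lip * Real.sqrt (sInf SSet) := mul_le_mul_of_nonneg_left h4 hLip
/-- **Robustness of optimal stopping.** If `f` is bounded and `L`-Lipschitz in its first
argument (uniformly in time), then `|v(μ) - v(ν)| ≤ L · AW₂(μ, ν)`. -/
theorem optimal_stopping_robust {d T : ℕ} (f : (Fin d → ℝ) → Fin T → ℝ) (Lip : ℝ)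
    (hLip : 0 ≤ Lip)
    (hbdd : ∃ C, ∀ u t, |f u t| ≤ C)
    (hlip : ∀ (t : Fin T) (u v : Fin d → ℝ),
      |f u t - f v t| ≤ Lip * Real.sqrt (∑ i, (u i - v i) ^ 2))
    (μ ν : Measure (PathSp d T)) [IsProbabilityMeasure μ] [IsProbabilityMeasure ν]
    (hμ : FinSndMoment μ) (hν : FinSndMoment ν) :
    |stopValue f μ - stopValue f ν| ≤ Lip * AW2 μ ν :=
  optimal_stopping_robust' f Lip hLip hbdd hlip μ ν hμ hν
end

section
/- Let (W_t)_{t∈[0,1]} be a standard Brownian motion, Z ∼ N(0,1) independent of W, δ ∈ (0,1), and let X be the fake Brownian motion built from W, Z, δ. Then X_δ = √δ · X_1 almost surely; moreover the payoff of the strategy that goes long one unit of X when X_δ > 0 and short when X_δ < 0 satisfies sign(X_δ)(X_1 − X_δ) = (1 − √δ)|X_1| ≥ 0 almost surely, and E[sign(X_δ)(X_1 − X_δ)] > 0, so this strategy is an arbitrage. -/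
/-!
STATEMENT 9 (The fake Brownian motion admits arbitrage: `X_δ = √δ · X_1` a.s. and the
long/short strategy based on the sign of `X_δ` has a.s. nonnegative, strictly positive
expected payoff).
-/

open MeasureTheory ProbabilityTheory

variable {Ω : Type*} [MeasurableSpace Ω]

/-- `W` is a standard Brownian motion on `[0,1]` under `P`. -/
structure IsStdBM (P : Measure Ω) (W : ℝ → Ω → ℝ) : Prop where
  meas : ∀ t, Measurable (W t)
  start : ∀ᵐ ω ∂P, W 0 ω = 0
  cont : ∀ᵐ ω ∂P, Continuous fun t => W t ω
  indep_incr : ∀ (n : ℕ) (t : Fin (n + 1) → ℝ), Monotone t → (∀ i, 0 ≤ t i) →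
    iIndepFun
      (fun i : Fin n => fun ω => W (t i.succ) ω - W (t i.castSucc) ω) P
  gauss_incr : ∀ s t : ℝ, 0 ≤ s → s ≤ t →
    P.map (fun ω => W t ω - W s ω) = gaussianReal 0 ((t - s).toNNReal)

/-- The fake Brownian motion built from `W`, `Z` and `δ`. -/
noncomputable def fakeBM (W : ℝ → Ω → ℝ) (Z : Ω → ℝ) (δ : ℝ) (t : ℝ) (ω : Ω) : ℝ :=
  if t ≤ δ then (t / Real.sqrt δ) * Z ω
  else W t ω + ((t - δ) / (1 - δ)) * (Z ω - W 1 ω)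
    + ((1 - t) / (1 - δ)) * (Real.sqrt δ * Z ω - W δ ω)

/-- `Z` is independent of the Brownian motion `W` (on `[0,1]`). -/
def IndepOfBM (P : Measure Ω) (W : ℝ → Ω → ℝ) (Z : Ω → ℝ) : Prop :=
  Indep (MeasurableSpace.comap Z inferInstance)
    (⨆ s ∈ Set.Icc (0 : ℝ) 1, MeasurableSpace.comap (W s) inferInstance) P


lemma abs_integrable_gaussian : Integrable (fun x : ℝ => |x|) (gaussianReal 0 1) := by
  rw [gaussianReal_of_var_ne_zero _ one_ne_zero, gaussianPDF_def,
    integrable_withDensity_iff ((measurable_gaussianPDFReal 0 1).ennreal_ofReal)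
      (Filter.Eventually.of_forall fun x => ENNReal.ofReal_lt_top)]
  have h := (integrable_rpow_mul_exp_neg_mul_sq (b := 1/2) (by norm_num)
      (s := 1) (by norm_num)).abs.const_mul ((Real.sqrt (2 * Real.pi * 1))⁻¹)
  apply h.mono'
  · exact (measurable_abs.mul
      ((measurable_gaussianPDFReal 0 1).ennreal_ofReal.ennreal_toReal)).aestronglyMeasurable
  · filter_upwards with x
    rw [ENNReal.toReal_ofReal (gaussianPDFReal_nonneg 0 1 x)]
    rw [Real.norm_eq_abs, abs_mul, abs_abs, abs_of_nonneg (gaussianPDFReal_nonneg 0 1 x),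
      gaussianPDFReal]
    rw [abs_mul, Real.rpow_one, abs_of_nonneg (Real.exp_pos _).le]
    simp only [NNReal.coe_one, mul_one, sub_zero]
    have : -x ^ 2 / 2 = -(1/2) * x ^ 2 := by ring
    rw [this]
    ring_nf
    exact le_refl _

lemma sign_mul_sub_eq (c z : ℝ) (hc : 0 < c) :
    Real.sign (c * z) * (z - c * z) = (1 - c) * |z| := by
  rcases lt_trichotomy z 0 with hz | hz | hz
  · rw [Real.sign_of_neg (by nlinarith), abs_of_neg hz]; ring
  · simp [hz]
  · rw [Real.sign_of_pos (by nlinarith), abs_of_pos hz]; ring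

/-- **Arbitrage in the fake Brownian motion.** Almost surely `X_δ = √δ · X_1`; the payoff
of going long one unit of `X` when `X_δ > 0` and short when `X_δ < 0` satisfies
`sign(X_δ)(X_1 - X_δ) = (1 - √δ)|X_1| ≥ 0` a.s., and its expectation is strictly
positive, so the strategy is an arbitrage. -/
theorem fakeBM_arbitrage (P : Measure Ω) [IsProbabilityMeasure P]
    (W : ℝ → Ω → ℝ) (Z : Ω → ℝ) (hW : IsStdBM P W) (hZmeas : Measurable Z)
    (hZ : P.map Z = gaussianReal 0 1) (hZW : IndepOfBM P W Z)
    (δ : ℝ) (hδ : 0 < δ) (hδ1 : δ < 1) :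
    (∀ᵐ ω ∂P, fakeBM W Z δ δ ω = Real.sqrt δ * fakeBM W Z δ 1 ω) ∧
    (∀ᵐ ω ∂P,
      Real.sign (fakeBM W Z δ δ ω) * (fakeBM W Z δ 1 ω - fakeBM W Z δ δ ω) =
        (1 - Real.sqrt δ) * |fakeBM W Z δ 1 ω| ∧
      0 ≤ Real.sign (fakeBM W Z δ δ ω) * (fakeBM W Z δ 1 ω - fakeBM W Z δ δ ω)) ∧
    0 < ∫ ω, Real.sign (fakeBM W Z δ δ ω) * (fakeBM W Z δ 1 ω - fakeBM W Z δ δ ω) ∂P := by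
  have hs0 : 0 < Real.sqrt δ := Real.sqrt_pos.mpr hδ
  have hs1 : Real.sqrt δ < 1 := by
    rw [show (1:ℝ) = Real.sqrt 1 by simp]
    exact Real.sqrt_lt_sqrt hδ.le hδ1
  have hXδ : ∀ ω, fakeBM W Z δ δ ω = Real.sqrt δ * Z ω := by
    intro ω
    rw [fakeBM, if_pos le_rfl, div_eq_iff hs0.ne' |>.mpr]
    rw [mul_comm, Real.mul_self_sqrt hδ.le]
  have hX1 : ∀ ω, fakeBM W Z δ 1 ω = Z ω := by
    intro ω
    rw [fakeBM, if_neg (by linarith)]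
    have h1δ : (1:ℝ) - δ ≠ 0 := by linarith
    field_simp
    ring
  have hpay : ∀ ω,
      Real.sign (fakeBM W Z δ δ ω) * (fakeBM W Z δ 1 ω - fakeBM W Z δ δ ω) =
        (1 - Real.sqrt δ) * |fakeBM W Z δ 1 ω| := by
    intro ω
    rw [hXδ, hX1]
    exact sign_mul_sub_eq _ _ hs0
  refine ⟨Filter.Eventually.of_forall fun ω => by rw [hXδ, hX1],
    Filter.Eventually.of_forall fun ω => ⟨hpay ω, by
      rw [hpay ω]; exact mul_nonneg (by linarith) (abs_nonneg _)⟩, ?_⟩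
  rw [integral_congr_ae (Filter.Eventually.of_forall hpay)]
  have hint : Integrable (fun ω => |Z ω|) P := by
    have h := abs_integrable_gaussian
    rw [← hZ] at h
    exact (integrable_map_measure h.aestronglyMeasurable hZmeas.aemeasurable).mp h
  simp only [hX1]
  rw [integral_const_mul]
  apply mul_pos (by linarith)
  have heq : ∫ ω, |Z ω| ∂P = ∫ x, |x| ∂(gaussianReal 0 1) := by
    rw [← hZ, integral_map hZmeas.aemeasurable measurable_abs.aestronglyMeasurable]
  rw [heq,
    integral_pos_iff_support_of_nonneg (fun x => abs_nonneg x) abs_integrable_gaussian]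
  have hsupp : Function.support (fun x : ℝ => |x|) = {(0:ℝ)}ᶜ := by
    ext x; simp [Function.support, abs_ne_zero]
  rw [hsupp, measure_compl (measurableSet_singleton 0) (measure_ne_top _ _)]
  have h0 : (gaussianReal 0 1) {(0:ℝ)} = 0 :=
    gaussianReal_absolutelyContinuous 0 one_ne_zero (measure_singleton 0)
  simp [h0]
end
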